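/- arXiv:2010.07753 — 7 statements merged into one kernel-verified Lean document; each statement's English description precedes it below -/
import Mathlib

section
/- Let U : ℝ^m → ℝ be differentiable with gradient ∇U, let L be a real m×m matrix with Lᵀ = -L, and let g : ℝ^m → ℝ^k be differentiable with Jacobian matrix G(q). Suppose q, p : ℝ → ℝ^m are differentiable and λ : ℝ → ℝ^k is such that for all t ∈ ℝ: q̇_t = p_t, ṗ_t = -∇U(q_t) - L p_t - G(q_t)ᵀ λ_t, and G(q_t) p_t = 0. Then the function t ↦ U(q_t) + (1/2)‖p_t‖² is constant on ℝ. -/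
open Matrix

/-- Energy conservation for constrained magnetic Hamiltonian dynamics:
along solutions of `q̇ = p`, `ṗ = -∇U(q) - L p - G(q)ᵀ λ`, `G(q) p = 0`,
the Hamiltonian `U(q) + ½‖p‖²` is constant. -/
theorem stmt0 {m k : ℕ}
    (U : (Fin m → ℝ) → ℝ) (gradU : (Fin m → ℝ) → (Fin m → ℝ))
    (hU : Differentiable ℝ U)
    (hgradU : ∀ x v, fderiv ℝ U x v = gradU x ⬝ᵥ v)
    (L : Matrix (Fin m) (Fin m) ℝ) (hL : Lᵀ = -L)
    (g : (Fin m → ℝ) → (Fin k → ℝ)) (G : (Fin m → ℝ) → Matrix (Fin k) (Fin m) ℝ)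
    (hg : Differentiable ℝ g)
    (hG : ∀ x v, fderiv ℝ g x v = (G x).mulVec v)
    (q p : ℝ → (Fin m → ℝ)) (lam : ℝ → (Fin k → ℝ))
    (hq : ∀ t, HasDerivAt q (p t) t)
    (hp : ∀ t, HasDerivAt p
      (-(gradU (q t)) - L.mulVec (p t) - (G (q t))ᵀ.mulVec (lam t)) t)
    (hcon : ∀ t, (G (q t)).mulVec (p t) = 0) :
    ∀ s t : ℝ, U (q s) + (1/2) * (p s ⬝ᵥ p s) = U (q t) + (1/2) * (p t ⬝ᵥ p t) := by
  set p' : ℝ → (Fin m → ℝ) :=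
    fun t => -(gradU (q t)) - L.mulVec (p t) - (G (q t))ᵀ.mulVec (lam t) with hp'
  -- component derivatives of p
  have hpi : ∀ (i : Fin m) (t : ℝ), HasDerivAt (fun t => p t i) (p' t i) t := by
    intro i t
    exact (ContinuousLinearMap.proj (R := ℝ) (φ := fun _ : Fin m => ℝ) i).hasFDerivAt.comp_hasDerivAt t (hp t)
  -- derivative of the energy
  have hE : ∀ t, HasDerivAt (fun t => U (q t) + (1/2) * (p t ⬝ᵥ p t))
      (gradU (q t) ⬝ᵥ p t + (1/2) * (p' t ⬝ᵥ p t + p t ⬝ᵥ p' t)) t := by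
    intro t
    have h1 : HasDerivAt (fun t => U (q t)) (gradU (q t) ⬝ᵥ p t) t := by
      have := (hU (q t)).hasFDerivAt.comp_hasDerivAt t (hq t)
      rwa [hgradU] at this
    have h2 : HasDerivAt (fun t => p t ⬝ᵥ p t) (p' t ⬝ᵥ p t + p t ⬝ᵥ p' t) t := by
      have : HasDerivAt (fun t => ∑ i, p t i * p t i)
          (∑ i, (p' t i * p t i + p t i * p' t i)) t :=
        HasDerivAt.fun_sum (fun i _ => (hpi i t).mul (hpi i t))
      simpa [dotProduct, Finset.sum_add_distrib] using this
    exact h1.add (h2.const_mul (1/2))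
  -- the derivative is zero
  have hzero : ∀ t, gradU (q t) ⬝ᵥ p t + (1/2) * (p' t ⬝ᵥ p t + p t ⬝ᵥ p' t) = 0 := by
    intro t
    have hcomm : p' t ⬝ᵥ p t = p t ⬝ᵥ p' t := dotProduct_comm _ _
    have hLp : p t ⬝ᵥ L.mulVec (p t) = 0 := by
      have h1 : p t ⬝ᵥ L.mulVec (p t) = L.vecMul (p t) ⬝ᵥ p t :=
        Matrix.dotProduct_mulVec _ _ _
      have h2 : L.vecMul (p t) = (-L).mulVec (p t) := by
        rw [← hL, Matrix.mulVec_transpose]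
      rw [h2, Matrix.neg_mulVec, neg_dotProduct, dotProduct_comm] at h1
      rw [dotProduct_comm]
      linarith
    have hGp : p t ⬝ᵥ (G (q t))ᵀ.mulVec (lam t) = 0 := by
      have h1 : p t ⬝ᵥ (G (q t))ᵀ.mulVec (lam t) = (G (q t))ᵀ.vecMul (p t) ⬝ᵥ lam t :=
        Matrix.dotProduct_mulVec _ _ _
      rw [Matrix.vecMul_transpose, hcon t] at h1
      simpa using h1
    have : p t ⬝ᵥ p' t = -(gradU (q t) ⬝ᵥ p t) := by
      rw [hp']
      simp only [dotProduct_sub, dotProduct_neg, hLp, hGp]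
      rw [dotProduct_comm]
      ring
    rw [hcomm, this]
    ring
  intro s t
  exact is_const_of_deriv_eq_zero
    (fun x => ((hE x)).differentiableAt)
    (fun x => by rw [(hE x).deriv]; exact hzero x) s t
end

section
/- Let U : ℝ^m → ℝ and g : ℝ^m → ℝ^k be twice continuously differentiable, with G(q) the Jacobian of g and ∇²U(q), ∇²g_i(q) the Hessian matrices of U and of the components g_i. Let L be a real m×m matrix with Lᵀ = -L. Let q, p : ℝ → ℝ^m be differentiable with q̇_t = p_t, and let λ : ℝ → ℝ^k. Suppose a, b, c, d : ℝ → ℝ^m are differentiable and m', n' : ℝ → ℝ^k are functions such that for all t: ȧ_t = b_t, ḃ_t = -∇²U(q_t) a_t - L b_t - G(q_t)ᵀ m'_t - Σ_{i=1}^k (λ_t)_i ∇²g_i(q_t) a_t, ċ_t = d_t, ḋ_t = -∇²U(q_t) c_t - L d_t - G(q_t)ᵀ n'_t - Σ_{i=1}^k (λ_t)_i ∇²g_i(q_t) c_t, and moreover G(q_t) a_t = 0 and G(q_t) c_t = 0 for all t. Then the function t ↦ ⟨a_t, d_t⟩ - ⟨c_t, b_t⟩ + ⟨a_t, L c_t⟩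 is constant on ℝ. -/
open Matrix

lemma hess_symm {m : ℕ} (U : (Fin m → ℝ) → ℝ) (gradU : (Fin m → ℝ) → (Fin m → ℝ))
    (HU : (Fin m → ℝ) → Matrix (Fin m) (Fin m) ℝ)
    (hU : ContDiff ℝ 2 U)
    (hgradU : ∀ x v, fderiv ℝ U x v = gradU x ⬝ᵥ v)
    (hHU : ∀ x v, fderiv ℝ gradU x v = (HU x).mulVec v) :
    ∀ x v w, v ⬝ᵥ (HU x).mulVec w = w ⬝ᵥ (HU x).mulVec v := by
  intro x v w
  have hC1 : ContDiff ℝ 1 (fderiv ℝ U) := hU.fderiv_right (by norm_num)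
  have hdU : Differentiable ℝ U := hU.differentiable (by norm_num)
  have hgrad_eq : gradU = fun y i => fderiv ℝ U y (Pi.single i 1) := by
    funext y i
    rw [hgradU]
    simp [dotProduct_single]
  have hdgrad : Differentiable ℝ gradU := by
    rw [hgrad_eq]
    exact differentiable_pi.2 fun i =>
      (hC1.differentiable (by norm_num)).clm_apply (differentiable_const _)
  set f'' := fderiv ℝ (fderiv ℝ U) x with hf''
  have hsym : ∀ v w, f'' v w = f'' w v := fun v w =>
    second_derivative_symmetric (fun y => hdU.differentiableAt.hasFDerivAt)
      ((hC1.differentiable (by norm_num) x).hasFDerivAt) v w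
  have key : ∀ (u : Fin m → ℝ) i, (HU x).mulVec u i = f'' u (Pi.single i 1) := by
    intro u i
    rw [← hHU]
    have h1 : HasFDerivAt gradU (fderiv ℝ gradU x) x :=
      (hdgrad x).hasFDerivAt
    have h2 : HasFDerivAt (fun y => gradU y i)
        ((ContinuousLinearMap.proj i).comp (fderiv ℝ gradU x)) x :=
      (ContinuousLinearMap.proj (R := ℝ) (φ := fun _ : Fin m => ℝ) i).hasFDerivAt.comp x h1
    have h3 : HasFDerivAt (fun y => gradU y i)
        ((ContinuousLinearMap.apply ℝ ℝ (Pi.single i 1)).comp f'') x := by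
      have : (fun y => gradU y i) = fun y => fderiv ℝ U y (Pi.single i 1) := by
        rw [hgrad_eq]
      rw [this]
      exact (ContinuousLinearMap.apply ℝ ℝ (Pi.single i 1)).hasFDerivAt.comp x
        ((hC1.differentiable (by norm_num) x).hasFDerivAt)
    have := h2.unique h3
    have := congrArg (fun (e : (Fin m → ℝ) →L[ℝ] ℝ) => e u) this
    simpa using this
  have hv : ∀ (u z : Fin m → ℝ), u ⬝ᵥ (HU x).mulVec z = f'' z u := by
    intro u z
    have h1 : u ⬝ᵥ (HU x).mulVec z = ∑ i, u i * f'' z (Pi.single i 1) := by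
      simp [dotProduct, key]
    rw [h1]
    have h2 : (f'' z) u = f'' z (∑ i, u i • (Pi.single i (1:ℝ) : Fin m → ℝ)) := by
      congr 1
      have : ∀ i, u i • (Pi.single i (1:ℝ) : Fin m → ℝ) = Pi.single i (u i) := by
        intro i; rw [← Pi.single_smul, smul_eq_mul, mul_one]
      simp only [this, Finset.univ_sum_single]
    rw [h2, map_sum]
    simp [smul_eq_mul]
  rw [hv, hv, hsym]

lemma hasDerivAt_dot {m : ℕ} {f g : ℝ → (Fin m → ℝ)} {f' g' : Fin m → ℝ} {t : ℝ}
    (hf : HasDerivAt f f' t) (hg : HasDerivAt g g' t) :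
    HasDerivAt (fun s => f s ⬝ᵥ g s) (f' ⬝ᵥ g t + f t ⬝ᵥ g') t := by
  have hfi : ∀ i, HasDerivAt (fun s => f s i) (f' i) t := fun i =>
    (ContinuousLinearMap.proj (R := ℝ) (φ := fun _ : Fin m => ℝ) i).hasFDerivAt.comp_hasDerivAt t hf
  have hgi : ∀ i, HasDerivAt (fun s => g s i) (g' i) t := fun i =>
    (ContinuousLinearMap.proj (R := ℝ) (φ := fun _ : Fin m => ℝ) i).hasFDerivAt.comp_hasDerivAt t hg
  have := HasDerivAt.fun_sum (u := Finset.univ) (fun i _ => (hfi i).mul (hgi i))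
  simpa [dotProduct, Finset.sum_add_distrib, mul_comm] using this

/-- The constrained magnetic Hamiltonian flow preserves the magnetic symplectic
2-form: along solutions of the variational (linearized) equations tangent to the
constraint set, the quantity `⟨a,d⟩ - ⟨c,b⟩ + ⟨a, L c⟩` is constant in time. -/
theorem stmt1 {m k : ℕ}
    (U : (Fin m → ℝ) → ℝ) (gradU : (Fin m → ℝ) → (Fin m → ℝ))
    (HU : (Fin m → ℝ) → Matrix (Fin m) (Fin m) ℝ)
    (hU : ContDiff ℝ 2 U)
    (hgradU : ∀ x v, fderiv ℝ U x v = gradU x ⬝ᵥ v)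
    (hHU : ∀ x v, fderiv ℝ gradU x v = (HU x).mulVec v)
    (g : (Fin m → ℝ) → (Fin k → ℝ)) (G : (Fin m → ℝ) → Matrix (Fin k) (Fin m) ℝ)
    (Hg : Fin k → (Fin m → ℝ) → Matrix (Fin m) (Fin m) ℝ)
    (hg : ContDiff ℝ 2 g)
    (hG : ∀ x v, fderiv ℝ g x v = (G x).mulVec v)
    (hHg : ∀ (i : Fin k) x v, fderiv ℝ (fun y => G y i) x v = (Hg i x).mulVec v)
    (L : Matrix (Fin m) (Fin m) ℝ) (hL : Lᵀ = -L)
    (q p : ℝ → (Fin m → ℝ)) (lam : ℝ → (Fin k → ℝ))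
    (hq : ∀ t, HasDerivAt q (p t) t)
    (a b c d : ℝ → (Fin m → ℝ)) (m' n' : ℝ → (Fin k → ℝ))
    (ha : ∀ t, HasDerivAt a (b t) t)
    (hb : ∀ t, HasDerivAt b
      (-(HU (q t)).mulVec (a t) - L.mulVec (b t) - (G (q t))ᵀ.mulVec (m' t)
        - ∑ i, lam t i • (Hg i (q t)).mulVec (a t)) t)
    (hc : ∀ t, HasDerivAt c (d t) t)
    (hd : ∀ t, HasDerivAt d
      (-(HU (q t)).mulVec (c t) - L.mulVec (d t) - (G (q t))ᵀ.mulVec (n' t)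
        - ∑ i, lam t i • (Hg i (q t)).mulVec (c t)) t)
    (hca : ∀ t, (G (q t)).mulVec (a t) = 0)
    (hcc : ∀ t, (G (q t)).mulVec (c t) = 0) :
    ∀ s t : ℝ,
      a s ⬝ᵥ d s - c s ⬝ᵥ b s + a s ⬝ᵥ L.mulVec (c s)
        = a t ⬝ᵥ d t - c t ⬝ᵥ b t + a t ⬝ᵥ L.mulVec (c t) := by
  -- Hessian symmetry for U
  have hHUsym := hess_symm U gradU HU hU hgradU hHU
  -- Hessian symmetry for each component of g
  have hHgsym : ∀ (i : Fin k) x v w,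
      v ⬝ᵥ (Hg i x).mulVec w = w ⬝ᵥ (Hg i x).mulVec v := by
    intro i
    refine hess_symm (fun x => g x i) (fun x => G x i) (Hg i) ?_ ?_ (hHg i)
    · exact (ContinuousLinearMap.proj (R := ℝ) (φ := fun _ : Fin k => ℝ) i).contDiff.comp hg
    · intro x v
      have h1 : HasFDerivAt g (fderiv ℝ g x) x :=
        ((hg.differentiable (by norm_num)) x).hasFDerivAt
      have h2 : HasFDerivAt (fun y => g y i)
          ((ContinuousLinearMap.proj (R := ℝ) (φ := fun _ : Fin k => ℝ) i).comp (fderiv ℝ g x)) x :=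
        (ContinuousLinearMap.proj (R := ℝ) (φ := fun _ : Fin k => ℝ) i).hasFDerivAt.comp x h1
      rw [h2.fderiv]
      simp [hG, Matrix.mulVec]
  set F : ℝ → ℝ := fun t => a t ⬝ᵥ d t - c t ⬝ᵥ b t + a t ⬝ᵥ L.mulVec (c t) with hF
  have hF0 : ∀ t, HasDerivAt F 0 t := by
    intro t
    have hLc : HasDerivAt (fun s => L.mulVec (c s)) (L.mulVec (d t)) t := by
      have := (Matrix.mulVecLin L).toContinuousLinearMap.hasFDerivAt.comp_hasDerivAt t (hc t)
      simpa [Function.comp_def] using this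
    have h1 := hasDerivAt_dot (ha t) (hd t)
    have h2 := hasDerivAt_dot (hc t) (hb t)
    have h3 := hasDerivAt_dot (ha t) hLc
    have hE := (h1.sub h2).add h3
    convert hE using 1
    · rfl
    · rfl
    · rfl
    -- show 0 = the total derivative expression
    have hGa : a t ⬝ᵥ (G (q t))ᵀ.mulVec (n' t) = 0 := by
      rw [dotProduct_mulVec, vecMul_transpose, hca, zero_dotProduct]
    have hGc : c t ⬝ᵥ (G (q t))ᵀ.mulVec (m' t) = 0 := by
      rw [dotProduct_mulVec, vecMul_transpose, hcc, zero_dotProduct]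
    have hskew : b t ⬝ᵥ L.mulVec (c t) = -(c t ⬝ᵥ L.mulVec (b t)) := by
      rw [dotProduct_mulVec, ← mulVec_transpose, hL, neg_mulVec, neg_dotProduct,
        dotProduct_comm]
    have hsum : a t ⬝ᵥ (∑ i, lam t i • (Hg i (q t)).mulVec (c t))
        = c t ⬝ᵥ (∑ i, lam t i • (Hg i (q t)).mulVec (a t)) := by
      have hlin : ∀ (u : Fin m → ℝ) (x : Fin k → Fin m → ℝ),
          u ⬝ᵥ (∑ i, x i) = ∑ i, u ⬝ᵥ x i := by
        intro u x
        simp only [dotProduct, Finset.sum_apply, Finset.mul_sum]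
        exact Finset.sum_comm
      rw [hlin, hlin]
      refine Finset.sum_congr rfl fun i _ => ?_
      rw [dotProduct_smul, dotProduct_smul, smul_eq_mul, smul_eq_mul, hHgsym]
    simp only [dotProduct_sub, dotProduct_neg]
    rw [hGa, hGc, hskew, hsum, hHUsym, dotProduct_comm (b t) (d t)]
    ring
  intro s t
  exact is_const_of_deriv_eq_zero (fun x => (hF0 x).differentiableAt)
    (fun x => (hF0 x).deriv) s t
end

section
/- Let g : ℝ^m → ℝ^k be twice continuously differentiable with Jacobian matrix G(q), let ε ∈ ℝ, and let μ : ℝ^m × ℝ^m → ℝ^k be differentiable. Define Ψ : ℝ^m × ℝ^m → ℝ^m × ℝ^m by Ψ(q,p) = (q, p - (ε/2) G(q)ᵀ μ(q,p)). Fix (q,p), let D denote the total derivative of Ψ at (q,p), and let u = (u_q, u_p), v = (v_q, v_p) ∈ ℝ^m × ℝ^m satisfy G(q) u_q = 0 and G(q) v_q = 0. Writing D u = (u_q, u_p') and D v = (v_q, v_p'), one has ⟨u_q, v_p'⟩ - ⟨v_q, u_p'⟩ = ⟨u_q, v_p⟩ - ⟨v_q, u_p⟩. -/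
open Matrix

/-- The Lagrange-multiplier momentum half-step
`Ψ(q,p) = (q, p - (ε/2) G(q)ᵀ μ(q,p))` preserves the canonical symplectic 2-form
`dq ∧ dp` on pairs of vectors whose position components are tangent to the
constraint set. -/
theorem stmt3 {m k : ℕ}
    (g : (Fin m → ℝ) → (Fin k → ℝ)) (G : (Fin m → ℝ) → Matrix (Fin k) (Fin m) ℝ)
    (hg : ContDiff ℝ 2 g)
    (hG : ∀ x v, fderiv ℝ g x v = (G x).mulVec v)
    (ε : ℝ)
    (μ : (Fin m → ℝ) × (Fin m → ℝ) → (Fin k → ℝ)) (hμ : Differentiable ℝ μ)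
    (Ψ : (Fin m → ℝ) × (Fin m → ℝ) → (Fin m → ℝ) × (Fin m → ℝ))
    (hΨ : ∀ z, Ψ z = (z.1, z.2 - (ε/2) • (G z.1)ᵀ.mulVec (μ z)))
    (q p : Fin m → ℝ)
    (u v : (Fin m → ℝ) × (Fin m → ℝ))
    (hu : (G q).mulVec u.1 = 0) (hv : (G q).mulVec v.1 = 0) :
    u.1 ⬝ᵥ (fderiv ℝ Ψ (q, p) v).2 - v.1 ⬝ᵥ (fderiv ℝ Ψ (q, p) u).2
      = u.1 ⬝ᵥ v.2 - v.1 ⬝ᵥ u.2 := by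
  classical
  set c : ℝ := ε / 2 with hc
  have hgd : Differentiable ℝ g := hg.differentiable (by norm_num)
  have hg1 : ContDiff ℝ 1 (fderiv ℝ g) := hg.fderiv_right (by norm_num)
  have hg'd : Differentiable ℝ (fderiv ℝ g) := hg1.differentiable (by norm_num)
  set f'' := fderiv ℝ (fderiv ℝ g) q with hf''def
  have hsymm : ∀ a b : (Fin m → ℝ), f'' a b = f'' b a := fun a b =>
    second_derivative_symmetric (fun y => (hgd y).hasFDerivAt) (hg'd q).hasFDerivAt a b
  set F : (Fin m → ℝ) × (Fin m → ℝ) → (Fin m → ℝ) := fun z => (G z.1)ᵀ.mulVec (μ z) with hFdef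
  have keydot : ∀ (z : (Fin m → ℝ) × (Fin m → ℝ)) (a : (Fin m → ℝ)), a ⬝ᵥ F z = fderiv ℝ g z.1 a ⬝ᵥ μ z := by
    intro z a
    rw [hG]
    simp only [hFdef, dotProduct, Matrix.mulVec, Matrix.transpose_apply, dotProduct,
      Finset.mul_sum, Finset.sum_mul]
    rw [Finset.sum_comm]
    refine Finset.sum_congr rfl fun i _ => Finset.sum_congr rfl fun j _ => by ring
  have hGentry : ∀ (x : (Fin m → ℝ)) i a, G x i a = fderiv ℝ g x (Pi.single a 1) i := by
    intro x i a; rw [hG, mulVec_single]; simp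
  have happ : ∀ w : (Fin m → ℝ), Differentiable ℝ (fun x => fderiv ℝ g x w) :=
    fun w => (ContinuousLinearMap.apply ℝ (Fin k → ℝ) w).differentiable.comp hg'd
  have hF : Differentiable ℝ F := by
    have hFeq : F = fun z => fun a => ∑ i, fderiv ℝ g z.1 (Pi.single a 1) i * μ z i := by
      funext z a
      simp only [hFdef, Matrix.mulVec, dotProduct, Matrix.transpose_apply]
      exact Finset.sum_congr rfl fun i _ => by rw [hGentry]
    rw [hFeq]
    refine differentiable_pi.2 fun a => Differentiable.fun_sum fun i _ => Differentiable.mul ?_ ?_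
    · exact (differentiable_pi.1 ((happ (Pi.single a 1)).comp differentiable_fst)) i
    · exact (differentiable_pi.1 hμ) i
  set DF := fderiv ℝ F (q, p) with hDFdef
  have hΨeq : Ψ = fun z => (z.1, z.2 - c • F z) := funext hΨ
  set L : ((Fin m → ℝ) × (Fin m → ℝ)) →L[ℝ] ((Fin m → ℝ) × (Fin m → ℝ)) :=
    (ContinuousLinearMap.fst ℝ (Fin m → ℝ) (Fin m → ℝ)).prod ((ContinuousLinearMap.snd ℝ (Fin m → ℝ) (Fin m → ℝ)) - c • DF) with hLdef
  have hΨder : HasFDerivAt Ψ L (q, p) := by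
    rw [hΨeq]
    exact HasFDerivAt.prodMk hasFDerivAt_fst
      ((hasFDerivAt_snd).sub (((hF (q, p)).hasFDerivAt).const_smul c))
  -- the dot-product continuous linear functional
  have key : ∀ (a : (Fin m → ℝ)) (b : (Fin m → ℝ) × (Fin m → ℝ)),
      a ⬝ᵥ DF b = f'' b.1 a ⬝ᵥ μ (q, p) + fderiv ℝ g q a ⬝ᵥ fderiv ℝ μ (q, p) b := by
    intro a b
    set ℓ : (Fin m → ℝ) →L[ℝ] ℝ := ∑ j, a j • (ContinuousLinearMap.proj j : (Fin m → ℝ) →L[ℝ] ℝ) with hℓdef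
    have hℓapp : ∀ x : (Fin m → ℝ), ℓ x = a ⬝ᵥ x := by
      intro x
      simp [hℓdef, dotProduct, ContinuousLinearMap.sum_apply,
        ContinuousLinearMap.proj_apply]
    have h1 : HasFDerivAt (fun z => a ⬝ᵥ F z) (ℓ.comp DF) (q, p) := by
      have := ℓ.hasFDerivAt.comp (q, p) (hF (q, p)).hasFDerivAt
      simpa only [Function.comp_def, hℓapp] using this
    -- explicit derivative by product rule
    have hc1 : ∀ i, HasFDerivAt (fun z : (Fin m → ℝ) × (Fin m → ℝ) => fderiv ℝ g z.1 a i)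
        ((ContinuousLinearMap.proj i).comp
          ((ContinuousLinearMap.apply ℝ (Fin k → ℝ) a).comp
            (f''.comp (ContinuousLinearMap.fst ℝ (Fin m → ℝ) (Fin m → ℝ))))) (q, p) := by
      intro i
      exact (ContinuousLinearMap.proj i).hasFDerivAt.comp (q, p)
        ((ContinuousLinearMap.apply ℝ (Fin k → ℝ) a).hasFDerivAt.comp (q, p)
          (((hg'd q).hasFDerivAt).comp (q, p) hasFDerivAt_fst))
    have hd1 : ∀ i, HasFDerivAt (fun z : (Fin m → ℝ) × (Fin m → ℝ) => μ z i)
        ((ContinuousLinearMap.proj i).comp (fderiv ℝ μ (q, p))) (q, p) := by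
      intro i
      simpa [Function.comp_def] using
        (ContinuousLinearMap.proj i).hasFDerivAt.comp (q, p) (hμ (q, p)).hasFDerivAt
    have h2 : HasFDerivAt (fun z => a ⬝ᵥ F z)
        (∑ i, ((fderiv ℝ g q a i) • ((ContinuousLinearMap.proj i).comp (fderiv ℝ μ (q, p)))
          + (μ (q, p) i) • ((ContinuousLinearMap.proj i).comp
              ((ContinuousLinearMap.apply ℝ (Fin k → ℝ) a).comp
                (f''.comp (ContinuousLinearMap.fst ℝ (Fin m → ℝ) (Fin m → ℝ))))))) (q, p) := by
      have heq : (fun z => a ⬝ᵥ F z)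
          = fun z : (Fin m → ℝ) × (Fin m → ℝ) => ∑ i, fderiv ℝ g z.1 a i * μ z i := by
        funext z; rw [keydot]; rfl
      rw [heq]
      exact HasFDerivAt.fun_sum fun i _ => (hc1 i).mul (hd1 i)
    have := h1.unique h2
    calc a ⬝ᵥ DF b = ℓ.comp DF b := (hℓapp _).symm
      _ = _ := by
            rw [this]
            simp only [ContinuousLinearMap.sum_apply, ContinuousLinearMap.add_apply,
              ContinuousLinearMap.smul_apply, ContinuousLinearMap.comp_apply,
              ContinuousLinearMap.proj_apply, ContinuousLinearMap.apply_apply,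
              ContinuousLinearMap.coe_fst', smul_eq_mul, dotProduct,
              Finset.sum_add_distrib]
            have comm : ∑ x : Fin k, μ (q, p) x * (f'' b.1) a x
                = ∑ x : Fin k, (f'' b.1) a x * μ (q, p) x :=
              Finset.sum_congr rfl fun i _ => mul_comm _ _
            rw [comm]
            exact add_comm _ _
  have hval : ∀ w : (Fin m → ℝ) × (Fin m → ℝ), (fderiv ℝ Ψ (q, p) w).2 = w.2 - c • DF w := by
    intro w
    rw [hΨder.fderiv]
    simp [hLdef]
  have hgu : fderiv ℝ g q u.1 = 0 := by rw [hG]; exact hu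
  have hgv : fderiv ℝ g q v.1 = 0 := by rw [hG]; exact hv
  have keyu : u.1 ⬝ᵥ DF v = f'' v.1 u.1 ⬝ᵥ μ (q, p) := by
    rw [key u.1 v, hgu]; simp
  have keyv : v.1 ⬝ᵥ DF u = f'' v.1 u.1 ⬝ᵥ μ (q, p) := by
    rw [key v.1 u, hgv, hsymm]; simp
  rw [hval u, hval v, dotProduct_sub, dotProduct_sub, dotProduct_smul, dotProduct_smul,
    keyu, keyv]
  ring
end

section
/- Let L be a real m×m skew-symmetric matrix (Lᵀ = -L) and ε ∈ ℝ. Let E = exp(-εL) and A = ∫_0^ε exp(-sL) ds (matrix exponential, entrywise integral). Let J_L be the 2m×2m block matrix [[L, I_m],[-I_m, 0]] and let M be the 2m×2m block matrix [[I_m, A],[0, E]]. Then Mᵀ J_L M = J_L. -/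
open Matrix

namespace Stmt5Aux

attribute [local instance] Matrix.linftyOpNormedRing Matrix.linftyOpNormedAlgebra

variable {m : ℕ}

noncomputable abbrev mexp (X : Matrix (Fin m) (Fin m) ℝ) := NormedSpace.exp X

lemma cont (L : Matrix (Fin m) (Fin m) ℝ) :
    Continuous fun s : ℝ => NormedSpace.exp (s • L) :=
  NormedSpace.exp_continuous.comp (continuous_id.smul continuous_const)

lemma intInt (L : Matrix (Fin m) (Fin m) ℝ) (a b : ℝ) :
    @IntervalIntegrable (Matrix (Fin m) (Fin m) ℝ) _ NormedAddGroup.toENormedAddMonoid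
      (fun s : ℝ => NormedSpace.exp (s • L)) MeasureTheory.volume a b :=
  (cont L).intervalIntegrable a b

/-- entry evaluation as CLM -/
noncomputable def entryCLM (i j : Fin m) : Matrix (Fin m) (Fin m) ℝ →L[ℝ] ℝ :=
  LinearMap.toContinuousLinearMap
    { toFun := fun M => M i j
      map_add' := fun _ _ => rfl
      map_smul' := fun _ _ => rfl }

lemma integral_entry (L : Matrix (Fin m) (Fin m) ℝ) (ε : ℝ) (i j : Fin m) :
    (∫ s in (0:ℝ)..ε, NormedSpace.exp (s • L)) i j
      = ∫ s in (0:ℝ)..ε, NormedSpace.exp (s • L) i j :=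
  ((entryCLM i j).intervalIntegral_comp_comm (intInt L 0 ε)).symm ▸ rfl

end Stmt5Aux

namespace Stmt5Aux

attribute [local instance] Matrix.linftyOpNormedRing Matrix.linftyOpNormedAlgebra

lemma mulRight_integral (L X : Matrix (Fin m) (Fin m) ℝ) (ε : ℝ) :
    (∫ s in (0:ℝ)..ε, NormedSpace.exp (s • L)) * X
      = ∫ s in (0:ℝ)..ε, NormedSpace.exp (s • L) * X := by
  have h3 := (LinearMap.toContinuousLinearMap
    (LinearMap.mulRight ℝ X)).intervalIntegral_comp_comm (intInt L 0 ε)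
  exact h3.symm

lemma mulLeft_integral (L X : Matrix (Fin m) (Fin m) ℝ) (ε : ℝ) :
    X * (∫ s in (0:ℝ)..ε, NormedSpace.exp (s • L))
      = ∫ s in (0:ℝ)..ε, X * NormedSpace.exp (s • L) := by
  have h3 := (LinearMap.toContinuousLinearMap
    (LinearMap.mulLeft ℝ X)).intervalIntegral_comp_comm (intInt L 0 ε)
  exact h3.symm

lemma ftc_right (L : Matrix (Fin m) (Fin m) ℝ) (ε : ℝ) :
    (∫ s in (0:ℝ)..ε, NormedSpace.exp (s • L)) * L
      = NormedSpace.exp (ε • L) - 1 := by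
  have h : ∀ s ∈ Set.uIcc (0:ℝ) ε,
      HasDerivAt (fun u : ℝ => NormedSpace.exp (u • L))
        (NormedSpace.exp (s • L) * L) s := fun s _ =>
    hasDerivAt_exp_smul_const L s
  have h2 := intervalIntegral.integral_eq_sub_of_hasDerivAt h
    (((cont L).mul continuous_const).intervalIntegrable 0 ε)
  rw [mulRight_integral L L ε, h2, zero_smul, NormedSpace.exp_zero]

lemma ftc_left (L : Matrix (Fin m) (Fin m) ℝ) (ε : ℝ) :
    L * (∫ s in (0:ℝ)..ε, NormedSpace.exp (s • L))
      = NormedSpace.exp (ε • L) - 1 := by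
  have h : ∀ s ∈ Set.uIcc (0:ℝ) ε,
      HasDerivAt (fun u : ℝ => NormedSpace.exp (u • L))
        (L * NormedSpace.exp (s • L)) s := fun s _ =>
    hasDerivAt_exp_smul_const' L s
  have h2 := intervalIntegral.integral_eq_sub_of_hasDerivAt h
    ((continuous_const.mul (cont L)).intervalIntegrable 0 ε)
  rw [mulLeft_integral L L ε, h2, zero_smul, NormedSpace.exp_zero]

lemma shift (L : Matrix (Fin m) (Fin m) ℝ) (ε : ℝ) :
    (∫ s in (0:ℝ)..ε, NormedSpace.exp (s • L)) * NormedSpace.exp ((-ε) • L)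
      = ∫ s in (0:ℝ)..ε, NormedSpace.exp ((-s) • L) := by
  rw [mulRight_integral L (NormedSpace.exp ((-ε) • L)) ε]
  have hmul : ∀ s : ℝ, NormedSpace.exp (s • L) * NormedSpace.exp ((-ε) • L)
      = NormedSpace.exp ((s - ε) • L) := by
    intro s
    rw [← Matrix.exp_add_of_commute _ _ (((Commute.refl L).smul_left s).smul_right (-ε))]
    congr 1
    rw [← add_smul]
    ring_nf
  simp only [hmul]
  have h4 : (∫ s in (0:ℝ)..ε, NormedSpace.exp ((s - ε) • L))
      = ∫ s in (0-ε:ℝ)..(ε-ε), NormedSpace.exp (s • L) :=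
    intervalIntegral.integral_comp_sub_right (fun u => NormedSpace.exp (u • L)) ε
  have h5 : (∫ s in (0:ℝ)..ε, NormedSpace.exp ((-s) • L))
      = ∫ s in (-ε:ℝ)..(-0), NormedSpace.exp (s • L) :=
    intervalIntegral.integral_comp_neg (fun u => NormedSpace.exp (u • L))
  rw [h4, h5]
  norm_num

end Stmt5Aux

/-- The Jacobian `M = [[I, A],[0, E]]` of the exact kinetic magnetic flow
(with `E = exp(-εL)`, `A = ∫₀^ε exp(-sL) ds`) is symplectic with respect to the
magnetic symplectic matrix `J_L = [[L, I],[-I, 0]]`: `Mᵀ J_L M = J_L`. -/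
theorem stmt5 {m : ℕ}
    (L : Matrix (Fin m) (Fin m) ℝ) (hL : Lᵀ = -L) (ε : ℝ)
    (E A : Matrix (Fin m) (Fin m) ℝ)
    (hE : E = NormedSpace.exp (-(ε • L)))
    (hA : A = Matrix.of fun i j => ∫ s in (0:ℝ)..ε, NormedSpace.exp (-(s • L)) i j)
    (J M : Matrix (Fin m ⊕ Fin m) (Fin m ⊕ Fin m) ℝ)
    (hJ : J = Matrix.fromBlocks L 1 (-1) 0)
    (hM : M = Matrix.fromBlocks 1 A 0 E) :
    Mᵀ * J * M = J := by
  letI : NormedRing (Matrix (Fin m) (Fin m) ℝ) := Matrix.linftyOpNormedRing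
  letI : NormedAlgebra ℝ (Matrix (Fin m) (Fin m) ℝ) := Matrix.linftyOpNormedAlgebra
  have hA' : A = ∫ s in (0:ℝ)..ε, NormedSpace.exp (s • (-L)) := by
    rw [hA]; ext i j
    simp only [Matrix.of_apply]
    rw [Stmt5Aux.integral_entry (-L) ε i j]
    simp_rw [smul_neg]
  have hE' : E = NormedSpace.exp (ε • (-L)) := by rw [hE, smul_neg]
  have h1 : L * A = 1 - E := by
    have h := Stmt5Aux.ftc_left (-L) ε
    rw [← hA', ← hE'] at h
    rw [← neg_neg (L * A), ← neg_mul, h, neg_sub]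
  have h1' : L * A + E = 1 := by rw [h1]; abel
  have h2 : Aᵀ * L - Eᵀ = -1 := by
    have ht := congrArg Matrix.transpose h1'
    simp only [Matrix.transpose_add, Matrix.transpose_mul, hL, Matrix.mul_neg,
      Matrix.transpose_one] at ht
    rw [← ht]; abel
  have hB : Aᵀ = ∫ s in (0:ℝ)..ε, NormedSpace.exp (s • L) := by
    ext i j
    rw [Matrix.transpose_apply, hA]
    simp only [Matrix.of_apply]
    rw [Stmt5Aux.integral_entry L ε i j]
    have key : ∀ s : ℝ, NormedSpace.exp (-(s • L)) j i = NormedSpace.exp (s • L) i j := by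
      intro s
      have hT : (-(s • L))ᵀ = s • L := by
        rw [Matrix.transpose_neg, Matrix.transpose_smul, hL, smul_neg, neg_neg]
      conv_rhs => rw [← hT, Matrix.exp_transpose]
      simp [Matrix.transpose_apply]
    simp_rw [key]
  have hATE : Aᵀ * E = A := by
    rw [hB, hE', hA', show ε • (-L) = (-ε) • L by rw [smul_neg, neg_smul],
      Stmt5Aux.shift L ε]
    have hfun : (fun s : ℝ => NormedSpace.exp ((-s) • L))
        = fun s : ℝ => NormedSpace.exp (s • (-L)) := by
      funext s; rw [neg_smul, smul_neg]
    show intervalIntegral (fun s : ℝ => NormedSpace.exp ((-s) • L)) 0 ε _ = _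
    rw [hfun]
  have h3 : (Aᵀ * L - Eᵀ) * A + Aᵀ * E = 0 := by
    rw [h2, hATE]; simp
  subst hJ hM
  rw [Matrix.fromBlocks_transpose, Matrix.transpose_one, Matrix.transpose_zero,
    Matrix.fromBlocks_multiply, Matrix.fromBlocks_multiply]
  refine Matrix.fromBlocks_inj.mpr ⟨by simp, ?_, ?_, ?_⟩
  · simpa using h1'
  · simpa [Matrix.mul_neg, sub_eq_add_neg] using h2
  · simpa [Matrix.mul_neg, sub_eq_add_neg, Matrix.add_mul] using h3
end

section
/- Let U : ℝ^m → ℝ be differentiable with gradient ∇U and let L be a real m×m skew-symmetric matrix. For ε ∈ ℝ define Φ1_ε(q,p) = (q, p - (ε/2)∇U(q)) and Φ2_ε(q,p) = (q + A(ε) p, exp(-εL) p) on ℝ^m × ℝ^m, where A(ε) = ∫_0^ε exp(-sL) ds, and let Ψ_ε = Φ1_ε ∘ Φ2_ε ∘ Φ1_ε. Then for every (q,p) ∈ ℝ^m × ℝ^m and every ε ∈ ℝ: Ψ_{-ε}(Ψ_ε(q,p)) = (q,p). -/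
open Matrix

attribute [local instance] Matrix.linftyOpNormedRing Matrix.linftyOpNormedAlgebra

private lemma expent_cont {m : ℕ} (L : Matrix (Fin m) (Fin m) ℝ) (i j : Fin m) :
    Continuous fun s : ℝ => NormedSpace.exp (-(s • L)) i j := by
  have h1 : Continuous fun s : ℝ => NormedSpace.exp (-(s • L)) :=
    NormedSpace.exp_continuous.comp (by fun_prop)
  exact ((continuous_apply j).comp (continuous_apply i)).comp h1

private lemma keyA {m : ℕ} (L : Matrix (Fin m) (Fin m) ℝ)
    (A : ℝ → Matrix (Fin m) (Fin m) ℝ)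
    (hA : ∀ ε : ℝ, A ε = Matrix.of fun i j =>
      ∫ s in (0:ℝ)..ε, NormedSpace.exp (-(s • L)) i j) (ε : ℝ) :
    A (-ε) * NormedSpace.exp (-(ε • L)) = -(A ε) := by
  ext i j
  simp only [hA, Matrix.mul_apply, Matrix.neg_apply, Matrix.of_apply]
  have hswap : ∀ k : Fin m,
      (∫ s in (0:ℝ)..(-ε), NormedSpace.exp (-(s • L)) i k) *
        NormedSpace.exp (-(ε • L)) k j
      = ∫ s in (0:ℝ)..(-ε),
          NormedSpace.exp (-(s • L)) i k * NormedSpace.exp (-(ε • L)) k j := by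
    intro k
    rw [← intervalIntegral.integral_mul_const]
  simp_rw [hswap]
  rw [← intervalIntegral.integral_finset_sum]
  · have hmul : ∀ s : ℝ,
        (∑ k, NormedSpace.exp (-(s • L)) i k * NormedSpace.exp (-(ε • L)) k j)
        = NormedSpace.exp (-((s + ε) • L)) i j := by
      intro s
      rw [← Matrix.mul_apply, ← Matrix.exp_add_of_commute]
      · congr 2
        rw [add_smul, neg_add]
      · exact ((Commute.refl L).smul_left s |>.smul_right ε).neg_left.neg_right
    simp_rw [hmul]
    rw [intervalIntegral.integral_comp_add_right (fun t => NormedSpace.exp (-(t • L)) i j) ε,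
      zero_add, neg_add_cancel, intervalIntegral.integral_symm]
  · intro k _
    exact ((expent_cont L i k).mul continuous_const).intervalIntegrable _ _

/-- The single-step magnetic integrator `Ψ_ε = Φ1_ε ∘ Φ2_ε ∘ Φ1_ε` is symmetric:
applying it with step size `-ε` undoes the step with step size `ε`. -/
theorem stmt6 {m : ℕ}
    (U : (Fin m → ℝ) → ℝ) (gradU : (Fin m → ℝ) → (Fin m → ℝ))
    (hU : Differentiable ℝ U)
    (hgradU : ∀ x v, fderiv ℝ U x v = gradU x ⬝ᵥ v)
    (L : Matrix (Fin m) (Fin m) ℝ) (hL : Lᵀ = -L)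
    (A : ℝ → Matrix (Fin m) (Fin m) ℝ)
    (hA : ∀ ε : ℝ, A ε = Matrix.of fun i j =>
      ∫ s in (0:ℝ)..ε, NormedSpace.exp (-(s • L)) i j)
    (Φ1 Φ2 Ψ : ℝ → (Fin m → ℝ) × (Fin m → ℝ) → (Fin m → ℝ) × (Fin m → ℝ))
    (hΦ1 : ∀ ε z, Φ1 ε z = (z.1, z.2 - (ε/2) • gradU z.1))
    (hΦ2 : ∀ ε z, Φ2 ε z =
      (z.1 + (A ε).mulVec z.2, (NormedSpace.exp (-(ε • L))).mulVec z.2))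
    (hΨ : ∀ ε, Ψ ε = Φ1 ε ∘ Φ2 ε ∘ Φ1 ε) :
    ∀ (ε : ℝ) (z : (Fin m → ℝ) × (Fin m → ℝ)), Ψ (-ε) (Ψ ε z) = z := by
  intro ε z
  have fact1 : ∀ v, (A (-ε)).mulVec ((NormedSpace.exp (-(ε • L))).mulVec v)
      = -((A ε).mulVec v) := by
    intro v
    rw [Matrix.mulVec_mulVec, keyA L A hA, Matrix.neg_mulVec]
  have fact2 : ∀ v, (NormedSpace.exp (ε • L)).mulVec
      ((NormedSpace.exp (-(ε • L))).mulVec v) = v := by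
    intro v
    rw [Matrix.mulVec_mulVec,
      ← Matrix.exp_add_of_commute (ε • L) (-(ε • L)) (Commute.refl (ε • L)).neg_right,
      add_neg_cancel, NormedSpace.exp_zero, Matrix.one_mulVec]
  simp only [hΨ, Function.comp_apply, hΦ1, hΦ2, neg_div, neg_smul, sub_neg_eq_add,
    sub_add_cancel, neg_neg, fact1, fact2, add_neg_cancel_right, sub_add_cancel]
end

section
/- Let U : ℝ^m → ℝ be twice continuously differentiable and let L be a real m×m skew-symmetric matrix. For ε ∈ ℝ define Φ1_ε(q,p) = (q, p - (ε/2)∇U(q)) and Φ2_ε(q,p) = (q + A(ε) p, exp(-εL) p) on ℝ^m × ℝ^m, where A(ε) = ∫_0^ε exp(-sL) ds, and let Ψ_ε = Φ1_ε ∘ Φ2_ε ∘ Φ1_ε. Then Ψ_ε is differentiable, and at every (q,p) ∈ ℝ^m × ℝ^m its total derivative D satisfies ⟨D u, J_L (D v)⟩ = ⟨u, J_L v⟩ for all u, v ∈ ℝ^m × ℝ^m, where J_L is the 2m×2m block matrix [[L, I_m],[-I_m, 0]] and ⟨·,·⟩ is the Euclidean inner product on ℝ^m × ℝ^m ≅ ℝ^{2m}.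 -/
open Matrix

section MagneticAux
open NormedSpace

section Aux
attribute [local instance] Matrix.linftyOpNormedRing Matrix.linftyOpNormedAlgebra

variable {m : ℕ}

private noncomputable def instC : CompleteSpace (Matrix (Fin m) (Fin m) ℝ) :=
  FiniteDimensional.complete ℝ _

attribute [local instance] instC

private theorem aux_entry_deriv (N : Matrix (Fin m) (Fin m) ℝ) (i j : Fin m) (s : ℝ) :
    HasDerivAt (fun t : ℝ => exp (t • N) i j) ((N * exp (s • N)) i j) s := by
  have h := hasDerivAt_exp_smul_const' (𝕂 := ℝ) N s
  let φ : Matrix (Fin m) (Fin m) ℝ →ₗ[ℝ] ℝ := Matrix.entryLinearMap ℝ ℝ i j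
  have h2 := (LinearMap.toContinuousLinearMap φ).hasFDerivAt.comp_hasDerivAt s h
  exact h2

private theorem aux_entry_cont (N : Matrix (Fin m) (Fin m) ℝ) (i j : Fin m) :
    Continuous (fun t : ℝ => exp (t • N) i j) :=
  continuous_iff_continuousAt.2 fun s => (aux_entry_deriv N i j s).continuousAt

private theorem aux_entry_cont2 (N M : Matrix (Fin m) (Fin m) ℝ) (i j : Fin m) :
    Continuous (fun t : ℝ => (M * exp (t • N)) i j) := by
  simp only [Matrix.mul_apply]
  exact continuous_finset_sum _ fun k _ => continuous_const.mul (aux_entry_cont N k j)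

/-- FTC for the entry integral. -/
private theorem aux_ftc (N : Matrix (Fin m) (Fin m) ℝ) (i j : Fin m) (ε : ℝ) :
    ∫ s in (0:ℝ)..ε, (N * exp (s • N)) i j
      = exp (ε • N) i j - (1 : Matrix (Fin m) (Fin m) ℝ) i j := by
  have := intervalIntegral.integral_eq_sub_of_hasDerivAt
    (f := fun t : ℝ => exp (t • N) i j) (f' := fun s => (N * exp (s • N)) i j)
    (a := 0) (b := ε) (fun t _ => aux_entry_deriv N i j t)
    ((aux_entry_cont2 N N i j).intervalIntegrable 0 ε)
  rw [this, zero_smul, exp_zero]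

private theorem aux_mul_integral (M N : Matrix (Fin m) (Fin m) ℝ) (i j : Fin m) (ε : ℝ) :
    (M * Matrix.of fun i j => ∫ s in (0:ℝ)..ε, exp (s • N) i j) i j
      = ∫ s in (0:ℝ)..ε, (M * exp (s • N)) i j := by
  simp only [Matrix.mul_apply, Matrix.of_apply, ← intervalIntegral.integral_const_mul]
  rw [← intervalIntegral.integral_finset_sum]
  exact fun k _ => (continuous_const.mul (aux_entry_cont N k j)).intervalIntegrable 0 ε

/-- Identity (I): `exp(-εL) + L * A(ε) = 1`. -/
private theorem auxI (L : Matrix (Fin m) (Fin m) ℝ) (ε : ℝ) :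
    exp (-(ε • L)) + L * (Matrix.of fun i j => ∫ s in (0:ℝ)..ε, exp (-(s • L)) i j) = 1 := by
  have hneg : ∀ s : ℝ, -(s • L) = s • (-L) := fun s => (smul_neg s L).symm
  have key : ∀ i j : Fin m,
      (L * (Matrix.of fun i j => ∫ s in (0:ℝ)..ε, exp (-(s • L)) i j)) i j
        = (1 : Matrix (Fin m) (Fin m) ℝ) i j - exp (-(ε • L)) i j := by
    intro i j
    simp only [hneg]
    rw [aux_mul_integral L (-L) i j ε]
    have : ∀ s : ℝ, (L * exp (s • (-L))) i j = -(((-L) * exp (s • (-L))) i j) := by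
      intro s; simp [Matrix.neg_mul]
    rw [intervalIntegral.integral_congr (fun s _ => this s), intervalIntegral.integral_neg,
      aux_ftc (-L) i j ε]
    ring
  ext i j
  rw [Matrix.add_apply, key i j]
  ring

/-- Identity (II): `exp(εL) * A(ε) = A(ε)ᵀ`. -/
private theorem auxII (L : Matrix (Fin m) (Fin m) ℝ) (hL : Lᵀ = -L) (ε : ℝ) :
    exp (ε • L) * (Matrix.of fun i j => ∫ s in (0:ℝ)..ε, exp (-(s • L)) i j)
      = (Matrix.of fun i j => ∫ s in (0:ℝ)..ε, exp (-(s • L)) i j)ᵀ := by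
  have hneg : ∀ s : ℝ, -(s • L) = s • (-L) := fun s => (smul_neg s L).symm
  ext i j
  simp only [hneg]
  rw [aux_mul_integral (exp (ε • L)) (-L) i j ε]
  have h1 : ∀ s : ℝ, (exp (ε • L) * exp (s • (-L))) i j = exp ((ε - s) • L) i j := by
    intro s
    rw [← Matrix.exp_add_of_commute]
    · rw [smul_neg, sub_smul, sub_eq_add_neg]
    · exact (((Commute.refl L).neg_right).smul_left ε).smul_right s
  rw [intervalIntegral.integral_congr (fun s _ => h1 s)]
  have h2 : (∫ s in (0:ℝ)..ε, exp ((ε - s) • L) i j) = ∫ s in (0:ℝ)..ε, exp (s • L) i j := by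
    have := intervalIntegral.integral_comp_sub_left (a := (0:ℝ)) (b := ε)
      (fun t => exp (t • L) i j) ε
    simpa using this
  rw [h2]
  simp only [Matrix.transpose_apply, Matrix.of_apply]
  have hT : ∀ s : ℝ, (exp (s • (-L)))ᵀ = exp (s • L) := by
    intro s
    rw [← Matrix.exp_transpose, Matrix.transpose_smul, Matrix.transpose_neg, hL]
    simp
  apply intervalIntegral.integral_congr
  intro s _
  show exp (s • L) i j = exp (s • -L) j i
  rw [← hT s]
  rfl

end Aux


private theorem aux_flip {m : ℕ} (M : Matrix (Fin m) (Fin m) ℝ) (x y : Fin m → ℝ) :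
    M.mulVec x ⬝ᵥ y = x ⬝ᵥ Mᵀ.mulVec y := by
  rw [dotProduct_mulVec, vecMul_transpose]

private theorem aux_bilin {m : ℕ} (L A E : Matrix (Fin m) (Fin m) ℝ) (hL : Lᵀ = -L)
    (h1 : E + L * A = 1) (h2 : Eᵀ * A = Aᵀ) (u1 u2 v1 v2 : Fin m → ℝ) :
    (u1 + A.mulVec u2) ⬝ᵥ L.mulVec (v1 + A.mulVec v2)
      + (u1 + A.mulVec u2) ⬝ᵥ E.mulVec v2
      - (v1 + A.mulVec v2) ⬝ᵥ E.mulVec u2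
    = u1 ⬝ᵥ L.mulVec v1 + u1 ⬝ᵥ v2 - v1 ⬝ᵥ u2 := by
  have hE : E = 1 - L * A := eq_sub_of_add_eq h1
  have hEt : Eᵀ = 1 + Aᵀ * L := by
    have := congrArg Matrix.transpose h1
    simp only [Matrix.transpose_add, Matrix.transpose_mul, Matrix.transpose_one, hL] at this
    rw [← this]; noncomm_ring
  have hIII : Aᵀ * L * A + Aᵀ * E - Eᵀ * A = 0 := by
    rw [h2, hE]; noncomm_ring
  -- expand
  simp only [Matrix.mulVec_add, add_dotProduct, dotProduct_add]
  have e1 : u1 ⬝ᵥ L.mulVec (A.mulVec v2) + u1 ⬝ᵥ E.mulVec v2 = u1 ⬝ᵥ v2 := by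
    rw [Matrix.mulVec_mulVec, ← dotProduct_add, ← Matrix.add_mulVec, add_comm (L*A) E,
      h1, Matrix.one_mulVec]
  have e2 : A.mulVec u2 ⬝ᵥ L.mulVec v1 - v1 ⬝ᵥ E.mulVec u2 = - (v1 ⬝ᵥ u2) := by
    have t1 : A.mulVec u2 ⬝ᵥ L.mulVec v1 = u2 ⬝ᵥ (Aᵀ * L).mulVec v1 := by
      rw [aux_flip, Matrix.mulVec_mulVec]
    have t2 : v1 ⬝ᵥ E.mulVec u2 = v1 ⬝ᵥ u2 + u2 ⬝ᵥ (Aᵀ * L).mulVec v1 := by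
      rw [hE, Matrix.sub_mulVec, dotProduct_sub, Matrix.one_mulVec]
      have : v1 ⬝ᵥ (L * A).mulVec u2 = -(u2 ⬝ᵥ (Aᵀ * L).mulVec v1) := by
        rw [dotProduct_comm, aux_flip, Matrix.transpose_mul, hL,
          Matrix.mul_neg, Matrix.neg_mulVec, dotProduct_neg]
      rw [this]; ring
    rw [t1, t2]; ring
  have e3 : A.mulVec u2 ⬝ᵥ L.mulVec (A.mulVec v2) + A.mulVec u2 ⬝ᵥ E.mulVec v2
      - A.mulVec v2 ⬝ᵥ E.mulVec u2 = 0 := by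
    have t1 : A.mulVec u2 ⬝ᵥ L.mulVec (A.mulVec v2) = u2 ⬝ᵥ (Aᵀ * L * A).mulVec v2 := by
      rw [aux_flip, Matrix.mulVec_mulVec, Matrix.mulVec_mulVec]
    have t2 : A.mulVec u2 ⬝ᵥ E.mulVec v2 = u2 ⬝ᵥ (Aᵀ * E).mulVec v2 := by
      rw [aux_flip, Matrix.mulVec_mulVec]
    have t3 : A.mulVec v2 ⬝ᵥ E.mulVec u2 = u2 ⬝ᵥ (Eᵀ * A).mulVec v2 := by
      rw [dotProduct_comm, aux_flip, Matrix.mulVec_mulVec]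
    rw [t1, t2, t3, ← dotProduct_add, ← dotProduct_sub, ← Matrix.add_mulVec,
      ← Matrix.sub_mulVec, hIII, Matrix.zero_mulVec, dotProduct_zero]
  linarith [e1, e2, e3]

end MagneticAux

open NormedSpace in
/-- The single-step magnetic integrator `Ψ_ε = Φ1_ε ∘ Φ2_ε ∘ Φ1_ε` is
differentiable and its total derivative preserves the magnetic symplectic
bilinear form `⟨u, J_L v⟩ = ⟨u_q, L v_q⟩ + ⟨u_q, v_p⟩ - ⟨v_q, u_p⟩` at every
point. -/
theorem stmt7 {m : ℕ}
    (U : (Fin m → ℝ) → ℝ) (gradU : (Fin m → ℝ) → (Fin m → ℝ))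
    (hU : ContDiff ℝ 2 U)
    (hgradU : ∀ x v, fderiv ℝ U x v = gradU x ⬝ᵥ v)
    (L : Matrix (Fin m) (Fin m) ℝ) (hL : Lᵀ = -L)
    (A : ℝ → Matrix (Fin m) (Fin m) ℝ)
    (hA : ∀ ε : ℝ, A ε = Matrix.of fun i j =>
      ∫ s in (0:ℝ)..ε, NormedSpace.exp (-(s • L)) i j)
    (Φ1 Φ2 Ψ : ℝ → (Fin m → ℝ) × (Fin m → ℝ) → (Fin m → ℝ) × (Fin m → ℝ))
    (hΦ1 : ∀ ε z, Φ1 ε z = (z.1, z.2 - (ε/2) • gradU z.1))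
    (hΦ2 : ∀ ε z, Φ2 ε z =
      (z.1 + (A ε).mulVec z.2, (NormedSpace.exp (-(ε • L))).mulVec z.2))
    (hΨ : ∀ ε, Ψ ε = Φ1 ε ∘ Φ2 ε ∘ Φ1 ε) :
    ∀ ε : ℝ, Differentiable ℝ (Ψ ε) ∧
      ∀ (z u v : (Fin m → ℝ) × (Fin m → ℝ)),
        (fderiv ℝ (Ψ ε) z u).1 ⬝ᵥ L.mulVec ((fderiv ℝ (Ψ ε) z v).1)
          + (fderiv ℝ (Ψ ε) z u).1 ⬝ᵥ (fderiv ℝ (Ψ ε) z v).2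
          - (fderiv ℝ (Ψ ε) z v).1 ⬝ᵥ (fderiv ℝ (Ψ ε) z u).2
        = u.1 ⬝ᵥ L.mulVec v.1 + u.1 ⬝ᵥ v.2 - v.1 ⬝ᵥ u.2 := by
  intro ε
  -- matrix identities
  have hI : exp (-(ε • L)) + L * A ε = 1 := by rw [hA ε]; exact auxI L ε
  have hEt : (exp (-(ε • L)))ᵀ = exp (ε • L) := by
    rw [← Matrix.exp_transpose]
    congr 1
    rw [Matrix.transpose_neg, Matrix.transpose_smul, hL]
    simp
  have hII : (exp (-(ε • L)))ᵀ * A ε = (A ε)ᵀ := by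
    rw [hEt, hA ε]; exact auxII L hL ε
  -- gradient machinery
  have hUd : Differentiable ℝ U := hU.differentiable (by norm_num)
  have hf' : ContDiff ℝ 1 (fderiv ℝ U) := hU.fderiv_right (by norm_num)
  set ι : ((Fin m → ℝ) →L[ℝ] ℝ) →L[ℝ] (Fin m → ℝ) :=
    LinearMap.toContinuousLinearMap
      (LinearMap.pi fun i => ((ContinuousLinearMap.apply ℝ ℝ (Pi.single i (1:ℝ)))).toLinearMap)
    with hι
  have hι_apply : ∀ (φ : (Fin m → ℝ) →L[ℝ] ℝ) (i : Fin m), ι φ i = φ (Pi.single i 1) :=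
    fun φ i => rfl
  have hgrad_eq : gradU = fun x => ι (fderiv ℝ U x) := by
    funext x i
    rw [hι_apply, hgradU x (Pi.single i 1), dotProduct_single, mul_one]
  have hf''d : ∀ q, HasFDerivAt (fderiv ℝ U) (fderiv ℝ (fderiv ℝ U) q) q :=
    fun q => (hf'.differentiable (by norm_num) q).hasFDerivAt
  have hgq : ∀ q, HasFDerivAt gradU (ι.comp (fderiv ℝ (fderiv ℝ U) q)) q := by
    intro q
    rw [hgrad_eq]
    exact ι.hasFDerivAt.comp q (hf''d q)
  have hkey : ∀ q x y, x ⬝ᵥ ι (fderiv ℝ (fderiv ℝ U) q y) = fderiv ℝ (fderiv ℝ U) q y x := by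
    intro q x y
    have hsum : (∑ i, x i • (Pi.single i (1:ℝ) : Fin m → ℝ)) = x := by
      funext j
      simp [Pi.single_apply, Finset.sum_ite_eq]
    calc x ⬝ᵥ ι (fderiv ℝ (fderiv ℝ U) q y)
        = ∑ i, x i * (fderiv ℝ (fderiv ℝ U) q y) (Pi.single i 1) := by
          simp [dotProduct, hι_apply]
      _ = (fderiv ℝ (fderiv ℝ U) q y) (∑ i, x i • (Pi.single i (1:ℝ) : Fin m → ℝ)) := by
          rw [map_sum]
          simp [smul_eq_mul]
      _ = fderiv ℝ (fderiv ℝ U) q y x := by rw [hsum]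
  have hsym : ∀ q x y, x ⬝ᵥ ι (fderiv ℝ (fderiv ℝ U) q y)
      = y ⬝ᵥ ι (fderiv ℝ (fderiv ℝ U) q x) := by
    intro q x y
    rw [hkey, hkey]
    exact second_derivative_symmetric (fun w => (hUd w).hasFDerivAt) (hf''d q) y x
  -- the derivative CLMs
  set D : (Fin m → ℝ) → (((Fin m → ℝ) × (Fin m → ℝ)) →L[ℝ] ((Fin m → ℝ) × (Fin m → ℝ))) := fun q =>
    (ContinuousLinearMap.fst ℝ (Fin m → ℝ) (Fin m → ℝ)).prod
      ((ContinuousLinearMap.snd ℝ (Fin m → ℝ) (Fin m → ℝ)) -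
        (ε/2) • ((ι.comp (fderiv ℝ (fderiv ℝ U) q)).comp
          (ContinuousLinearMap.fst ℝ (Fin m → ℝ) (Fin m → ℝ)))) with hD
  have hD_apply : ∀ q (u : (Fin m → ℝ) × (Fin m → ℝ)), D q u = (u.1, u.2 - (ε/2) • ι (fderiv ℝ (fderiv ℝ U) q u.1)) :=
    fun q u => rfl
  set T : ((Fin m → ℝ) × (Fin m → ℝ)) →L[ℝ] ((Fin m → ℝ) × (Fin m → ℝ)) :=
    ((ContinuousLinearMap.fst ℝ (Fin m → ℝ) (Fin m → ℝ)) +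
      (LinearMap.toContinuousLinearMap (Matrix.mulVecLin (A ε))).comp
        (ContinuousLinearMap.snd ℝ (Fin m → ℝ) (Fin m → ℝ))).prod
      ((LinearMap.toContinuousLinearMap (Matrix.mulVecLin (exp (-(ε • L))))).comp
        (ContinuousLinearMap.snd ℝ (Fin m → ℝ) (Fin m → ℝ))) with hT
  have hT_apply : ∀ u : (Fin m → ℝ) × (Fin m → ℝ),
      T u = (u.1 + (A ε).mulVec u.2, (exp (-(ε • L))).mulVec u.2) := fun u => rfl
  -- HasFDerivAt facts
  have hΦ1d : ∀ z : (Fin m → ℝ) × (Fin m → ℝ), HasFDerivAt (Φ1 ε) (D z.1) z := by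
    intro z
    have hfun : Φ1 ε = fun z : (Fin m → ℝ) × (Fin m → ℝ) => (z.1, z.2 - (ε/2) • gradU z.1) := funext (hΦ1 ε)
    rw [hfun, hD]
    exact HasFDerivAt.prodMk (hasFDerivAt_fst)
      (HasFDerivAt.sub (hasFDerivAt_snd) (((hgq z.1).comp z (hasFDerivAt_fst)).const_smul (ε/2)))
  have hΦ2d : ∀ z : (Fin m → ℝ) × (Fin m → ℝ), HasFDerivAt (Φ2 ε) T z := by
    intro z
    have hfun : Φ2 ε = fun z : (Fin m → ℝ) × (Fin m → ℝ) => T z := by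
      funext z
      rw [hΦ2 ε z, hT_apply]
    rw [hfun]
    exact T.hasFDerivAt
  have hΨd : ∀ z : (Fin m → ℝ) × (Fin m → ℝ), HasFDerivAt (Ψ ε)
      ((D ((Φ2 ε) ((Φ1 ε) z)).1).comp (T.comp (D z.1))) z := by
    intro z
    rw [hΨ ε]
    exact (hΦ1d ((Φ2 ε) ((Φ1 ε) z))).comp z ((hΦ2d (Φ1 ε z)).comp z (hΦ1d z))
  refine ⟨fun z => (hΨd z).differentiableAt, ?_⟩
  intro z u v
  rw [(hΨd z).fderiv]
  -- form preservation for D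
  have ωD : ∀ q (u v : (Fin m → ℝ) × (Fin m → ℝ)),
      (D q u).1 ⬝ᵥ L.mulVec (D q v).1 + (D q u).1 ⬝ᵥ (D q v).2 - (D q v).1 ⬝ᵥ (D q u).2
        = u.1 ⬝ᵥ L.mulVec v.1 + u.1 ⬝ᵥ v.2 - v.1 ⬝ᵥ u.2 := by
    intro q u v
    rw [hD_apply, hD_apply]
    simp only [dotProduct_sub, dotProduct_smul, smul_eq_mul]
    rw [hsym q u.1 v.1]
    ring
  have ωT : ∀ u v : (Fin m → ℝ) × (Fin m → ℝ),
      (T u).1 ⬝ᵥ L.mulVec (T v).1 + (T u).1 ⬝ᵥ (T v).2 - (T v).1 ⬝ᵥ (T u).2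
        = u.1 ⬝ᵥ L.mulVec v.1 + u.1 ⬝ᵥ v.2 - v.1 ⬝ᵥ u.2 := by
    intro u v
    rw [hT_apply, hT_apply]
    exact aux_bilin L (A ε) (exp (-(ε • L))) hL hI hII u.1 u.2 v.1 v.2
  have hcomp : ∀ w : (Fin m → ℝ) × (Fin m → ℝ), ((D ((Φ2 ε) ((Φ1 ε) z)).1).comp (T.comp (D z.1))) w
      = D ((Φ2 ε) ((Φ1 ε) z)).1 (T (D z.1 w)) := fun w => rfl
  rw [hcomp u, hcomp v, ωD, ωT, ωD]
end

section
/- Let U : ℝ^m → ℝ and g : ℝ^m → ℝ^k be twice continuously differentiable, with G(q) the Jacobian of g, let L be a real m×m skew-symmetric matrix, ε ∈ ℝ, and let μ, ν : ℝ^m × ℝ^m → ℝ^k be differentiable. Define Φ1_ε(q,p) = (q, p - (ε/2)∇U(q)), Φ2_ε(q,p) = (q + A(ε) p, exp(-εL) p) with A(ε) = ∫_0^ε exp(-sL) ds, Ψ_ε = Φ1_ε ∘ Φ2_ε ∘ Φ1_ε, and define T : ℝ^m × ℝ^m → ℝ^m × ℝ^m by: p̄(q,p) = p - (ε/2) G(q)ᵀ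 μ(q,p); (q̂(q,p), p̂(q,p)) = Ψ_ε(q, p̄(q,p)); T(q,p) = (q̂(q,p), p̂(q,p) - (ε/2) G(q̂(q,p))ᵀ ν(q,p)). Fix (q,p), suppose T is differentiable at (q,p), and let D be its total derivative there. Let u, v ∈ ℝ^m × ℝ^m be such that the q-components u_q, v_q satisfy G(q) u_q = 0 and G(q) v_q = 0, and such that the q-components of D u and D v lie in the kernel of G(q̂(q,p)). Then ⟨D u, J_L (D v)⟩ = ⟨u, J_L v⟩, where J_L is the 2m×2m block matrix [[L, I_m],[-I_m, 0]]. -/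
open Matrix

variable {m : ℕ}

noncomputable def Ee (m : ℕ) (L : Matrix (Fin m) (Fin m) ℝ) (s : ℝ) : Matrix (Fin m) (Fin m) ℝ :=
  NormedSpace.exp (-(s • L))

lemma hEderivEntry (L : Matrix (Fin m) (Fin m) ℝ) (t : ℝ) (i j : Fin m) :
    HasDerivAt (fun s : ℝ => Ee m L s i j) (((-L) * Ee m L t) i j) t := by
  letI : SeminormedRing (Matrix (Fin m) (Fin m) ℝ) := Matrix.linftyOpSemiNormedRing
  letI : NormedRing (Matrix (Fin m) (Fin m) ℝ) := Matrix.linftyOpNormedRing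
  letI : NormedAlgebra ℝ (Matrix (Fin m) (Fin m) ℝ) := Matrix.linftyOpNormedAlgebra
  have hM : HasDerivAt (fun s : ℝ => Ee m L s) ((-L) * Ee m L t) t := by
    have := hasDerivAt_exp_smul_const' (𝕂 := ℝ) (-L) t
    simp only [smul_neg] at this
    exact this
  have hl : IsLinearMap ℝ (fun M : Matrix (Fin m) (Fin m) ℝ => M i j) :=
    ⟨fun _ _ => rfl, fun _ _ => rfl⟩
  let l : Matrix (Fin m) (Fin m) ℝ →ₗ[ℝ] ℝ := IsLinearMap.mk' _ hl
  have hc : Continuous l := l.continuous_of_finiteDimensional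
  have := (⟨l, hc⟩ : Matrix (Fin m) (Fin m) ℝ →L[ℝ] ℝ).hasFDerivAt.comp_hasDerivAt t hM
  exact this

lemma hEcontEntry (L : Matrix (Fin m) (Fin m) ℝ) (i j : Fin m) :
    Continuous (fun s : ℝ => Ee m L s i j) := by
  have : Differentiable ℝ (fun s : ℝ => Ee m L s i j) :=
    fun t => (hEderivEntry L t i j).differentiableAt
  exact this.continuous

noncomputable def Aa (m : ℕ) (L : Matrix (Fin m) (Fin m) ℝ) (ε : ℝ) : Matrix (Fin m) (Fin m) ℝ :=
  Matrix.of fun i j => ∫ s in (0:ℝ)..ε, Ee m L s i j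

lemma M1 (L : Matrix (Fin m) (Fin m) ℝ) (ε : ℝ) :
    L * Aa m L ε = 1 - Ee m L ε := by
  ext i j
  have key : ∀ i' j', (∫ s in (0:ℝ)..ε, ((-L) * Ee m L s) i' j') = Ee m L ε i' j' - Ee m L 0 i' j' := by
    intro i' j'
    apply intervalIntegral.integral_eq_sub_of_hasDerivAt
    · intro t _; exact hEderivEntry L t i' j'
    · apply Continuous.intervalIntegrable
      have : Continuous fun s : ℝ => ∑ l, (-L) i' l * Ee m L s l j' := by
        apply continuous_finset_sum
        intro l _
        exact continuous_const.mul (hEcontEntry L l j')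
      simpa [Matrix.mul_apply] using this
  have hE0 : Ee m L 0 = 1 := by simp [Ee, NormedSpace.exp_zero]
  have h1 : (L * Aa m L ε) i j = -∑ l, ∫ s in (0:ℝ)..ε, ((-L) i l * Ee m L s l j) := by
    simp only [Matrix.mul_apply, Aa, Matrix.of_apply, intervalIntegral.integral_const_mul,
      Matrix.neg_apply, neg_mul, ← Finset.sum_neg_distrib, neg_neg,
      intervalIntegral.integral_neg]
  have h2 : (∫ s in (0:ℝ)..ε, ((-L) * Ee m L s) i j)
      = ∑ l, ∫ s in (0:ℝ)..ε, ((-L) i l * Ee m L s l j) := by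
    rw [← intervalIntegral.integral_finset_sum]
    · simp [Matrix.mul_apply]
    · intro l _
      exact (continuous_const.mul (hEcontEntry L l j)).intervalIntegrable _ _
  rw [h1, ← h2, key, hE0]
  simp [Matrix.sub_apply]

lemma EeT (L : Matrix (Fin m) (Fin m) ℝ) (hL : Lᵀ = -L) (s : ℝ) :
    (Ee m L s)ᵀ = NormedSpace.exp (s • L) := by
  rw [Ee, ← Matrix.exp_transpose]
  congr 1
  rw [Matrix.transpose_neg, Matrix.transpose_smul, hL]
  simp

lemma Ee_mul (L : Matrix (Fin m) (Fin m) ℝ) (s ε : ℝ) :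
    NormedSpace.exp (s • L) * Ee m L ε = Ee m L (ε - s) := by
  rw [Ee, Ee, ← Matrix.exp_add_of_commute]
  · congr 1
    rw [← neg_smul, ← add_smul, ← neg_smul]
    congr 1; ring
  · exact (Commute.refl L).smul_left _ |>.smul_right _ |>.neg_right

lemma M2 (L : Matrix (Fin m) (Fin m) ℝ) (hL : Lᵀ = -L) (ε : ℝ) :
    (Aa m L ε)ᵀ * Ee m L ε = Aa m L ε := by
  ext i j
  have h1 : ((Aa m L ε)ᵀ * Ee m L ε) i j
      = ∑ l, ∫ s in (0:ℝ)..ε, Ee m L s l i * Ee m L ε l j := by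
    simp [Matrix.mul_apply, Aa, Matrix.transpose_apply, intervalIntegral.integral_mul_const]
  have h2 : ∀ s : ℝ, ∑ l, Ee m L s l i * Ee m L ε l j = Ee m L (ε - s) i j := by
    intro s
    have : ((Ee m L s)ᵀ * Ee m L ε) i j = Ee m L (ε - s) i j := by
      rw [EeT L hL, Ee_mul]
    simpa [Matrix.mul_apply, Matrix.transpose_apply] using this
  rw [h1, ← intervalIntegral.integral_finset_sum]
  · rw [intervalIntegral.integral_congr (g := fun s => Ee m L (ε - s) i j)
      (fun s _ => h2 s)]
    have := intervalIntegral.integral_comp_sub_left (a := (0:ℝ)) (b := ε)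
      (fun t => Ee m L t i j) ε
    simpa [Aa] using this
  · intro l _
    exact ((hEcontEntry L l i).mul continuous_const).intervalIntegrable _ _

variable {m : ℕ}

lemma grad_eq (h : (Fin m → ℝ) → ℝ) (gh : (Fin m → ℝ) → (Fin m → ℝ))
    (hgh : ∀ x v, fderiv ℝ h x v = gh x ⬝ᵥ v) (x : Fin m → ℝ) (i : Fin m) :
    gh x i = fderiv ℝ h x (Pi.single i 1) := by
  rw [hgh]
  simp [dotProduct_single]

lemma grad_diff (h : (Fin m → ℝ) → ℝ) (gh : (Fin m → ℝ) → (Fin m → ℝ))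
    (hh : ContDiff ℝ 2 h) (hgh : ∀ x v, fderiv ℝ h x v = gh x ⬝ᵥ v) :
    Differentiable ℝ gh := by
  have hF : ContDiff ℝ 1 (fderiv ℝ h) := hh.fderiv_right (le_refl _)
  have : gh = fun x => fun i => (fderiv ℝ h x) (Pi.single i 1) := by
    funext x i; exact grad_eq h gh hgh x i
  rw [this]
  apply differentiable_pi.2
  intro i
  exact (ContinuousLinearMap.apply ℝ ℝ ((Pi.single i 1 : Fin m → ℝ))).differentiable.comp
    (hF.differentiable one_ne_zero)

lemma grad_symm (h : (Fin m → ℝ) → ℝ) (gh : (Fin m → ℝ) → (Fin m → ℝ))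
    (hh : ContDiff ℝ 2 h) (hgh : ∀ x v, fderiv ℝ h x v = gh x ⬝ᵥ v)
    (x a b : Fin m → ℝ) :
    a ⬝ᵥ fderiv ℝ gh x b = b ⬝ᵥ fderiv ℝ gh x a := by
  have hF : ContDiff ℝ 1 (fderiv ℝ h) := hh.fderiv_right (le_refl _)
  have hdh : Differentiable ℝ h := hh.differentiable two_ne_zero
  have hsym : ∀ v w, fderiv ℝ (fderiv ℝ h) x v w = fderiv ℝ (fderiv ℝ h) x w v :=
    second_derivative_symmetric (fun y => (hdh y).hasFDerivAt)
      ((hF.differentiable one_ne_zero x).hasFDerivAt)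
  set E : ((Fin m → ℝ) →L[ℝ] ℝ) →L[ℝ] (Fin m → ℝ) :=
    ContinuousLinearMap.pi (fun i => ContinuousLinearMap.apply ℝ ℝ ((Pi.single i 1 : Fin m → ℝ)))
    with hE
  have hghE : gh = fun y => E (fderiv ℝ h y) := by
    funext y i
    simpa [hE] using grad_eq h gh hgh y i
  have key : ∀ c, fderiv ℝ gh x c = fun i => fderiv ℝ (fderiv ℝ h) x c (Pi.single i 1) := by
    intro c
    have hcomp : fderiv ℝ gh x = E.comp (fderiv ℝ (fderiv ℝ h) x) := by
      rw [hghE]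
      exact (E.hasFDerivAt.comp x ((hF.differentiable one_ne_zero x).hasFDerivAt)).fderiv
    rw [hcomp]
    rfl
  have expand : ∀ c d : Fin m → ℝ,
      c ⬝ᵥ (fun i => fderiv ℝ (fderiv ℝ h) x d (Pi.single i 1))
        = fderiv ℝ (fderiv ℝ h) x d c := by
    intro c d
    have hc : c = ∑ i, c i • (Pi.single i 1 : Fin m → ℝ) := by
      funext j
      simp [Finset.sum_apply, Pi.single_apply, Finset.sum_ite_eq]
    calc c ⬝ᵥ (fun i => fderiv ℝ (fderiv ℝ h) x d (Pi.single i 1))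
        = ∑ i, c i * fderiv ℝ (fderiv ℝ h) x d (Pi.single i 1) := rfl
      _ = fderiv ℝ (fderiv ℝ h) x d (∑ i, c i • (Pi.single i 1 : Fin m → ℝ)) := by
          rw [map_sum]
          simp [smul_eq_mul]
      _ = fderiv ℝ (fderiv ℝ h) x d c := by rw [← hc]
  rw [key, key, expand, expand, hsym]

lemma dot_mulVec_left (M : Matrix (Fin m) (Fin m) ℝ) (a b : Fin m → ℝ) :
    (M *ᵥ a) ⬝ᵥ b = a ⬝ᵥ (Mᵀ *ᵥ b) := by
  rw [Matrix.dotProduct_mulVec, Matrix.vecMul_transpose, dotProduct_comm]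

lemma omega_phi2 (L A E : Matrix (Fin m) (Fin m) ℝ) (hL : Lᵀ = -L)
    (hM1 : L * A = 1 - E) (hM2 : Aᵀ * E = A) (a b c d : Fin m → ℝ) :
    (a + A *ᵥ b) ⬝ᵥ L *ᵥ (c + A *ᵥ d) + (a + A *ᵥ b) ⬝ᵥ E *ᵥ d
      - (c + A *ᵥ d) ⬝ᵥ E *ᵥ b
    = a ⬝ᵥ L *ᵥ c + a ⬝ᵥ d - c ⬝ᵥ b := by
  have hAtL : Aᵀ * L = Eᵀ - 1 := by
    have h0 : (L * A)ᵀ = (1 - E)ᵀ := by rw [hM1]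
    rw [Matrix.transpose_mul, hL, Matrix.mul_neg] at h0
    have := congrArg Neg.neg h0
    simp only [neg_neg, Matrix.transpose_sub, Matrix.transpose_one, neg_sub] at this
    rw [this]
  have e2 : a ⬝ᵥ L *ᵥ (A *ᵥ d) = a ⬝ᵥ d - a ⬝ᵥ E *ᵥ d := by
    rw [Matrix.mulVec_mulVec, hM1, Matrix.sub_mulVec, Matrix.one_mulVec, dotProduct_sub]
  have e3 : (A *ᵥ b) ⬝ᵥ L *ᵥ c = b ⬝ᵥ Eᵀ *ᵥ c - b ⬝ᵥ c := by
    rw [dot_mulVec_left, Matrix.mulVec_mulVec, hAtL, Matrix.sub_mulVec, Matrix.one_mulVec,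
      dotProduct_sub]
  have e4 : (A *ᵥ b) ⬝ᵥ L *ᵥ (A *ᵥ d) = b ⬝ᵥ (Eᵀ * A) *ᵥ d - b ⬝ᵥ A *ᵥ d := by
    rw [dot_mulVec_left, Matrix.mulVec_mulVec, Matrix.mulVec_mulVec, hAtL,
      Matrix.sub_mul, Matrix.one_mul, Matrix.sub_mulVec, dotProduct_sub]
  have e6 : (A *ᵥ b) ⬝ᵥ E *ᵥ d = b ⬝ᵥ A *ᵥ d := by
    rw [dot_mulVec_left, Matrix.mulVec_mulVec, hM2]
  have e7 : c ⬝ᵥ E *ᵥ b = b ⬝ᵥ Eᵀ *ᵥ c := by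
    rw [Matrix.dotProduct_mulVec, ← Matrix.mulVec_transpose, dotProduct_comm]
  have e8 : (A *ᵥ d) ⬝ᵥ E *ᵥ b = b ⬝ᵥ (Eᵀ * A) *ᵥ d := by
    rw [dot_mulVec_left, Matrix.mulVec_mulVec, hM2]
    have hT : (Eᵀ * A)ᵀ = A := by
      rw [Matrix.transpose_mul, Matrix.transpose_transpose, hM2]
    have key : b ⬝ᵥ (Eᵀ * A) *ᵥ d = ((Eᵀ * A)ᵀ *ᵥ b) ⬝ᵥ d := by
      rw [dot_mulVec_left, Matrix.transpose_transpose]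
    rw [key, hT, dotProduct_comm]
  have hcb : c ⬝ᵥ b = b ⬝ᵥ c := dotProduct_comm c b
  simp only [dotProduct_add, Matrix.mulVec_add, add_dotProduct]
  rw [e2, e3, e4, e6, e7, e8, hcb]
  ring

variable {k : ℕ}

noncomputable def mulVecCLM (M : Matrix (Fin m) (Fin m) ℝ) :
    (Fin m → ℝ) →L[ℝ] (Fin m → ℝ) :=
  LinearMap.toContinuousLinearMap M.mulVecLin

@[simp] lemma mulVecCLM_apply (M : Matrix (Fin m) (Fin m) ℝ) (v : Fin m → ℝ) :
    mulVecCLM M v = M *ᵥ v := rfl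

section P

variable (ε : ℝ) (G : (Fin m → ℝ) → Matrix (Fin k) (Fin m) ℝ)

/-- derivative of the "momentum correction" map `(z, w) ↦ (z₁, z₂ - (ε/2) Gᵀ(z₁) w)` -/
noncomputable def DPmap (x1 : Fin m → ℝ) (w₀ : Fin k → ℝ) :
    (((Fin m → ℝ) × (Fin m → ℝ)) × (Fin k → ℝ)) →L[ℝ] ((Fin m → ℝ) × (Fin m → ℝ)) :=
  ((ContinuousLinearMap.fst ℝ (Fin m → ℝ) (Fin m → ℝ)).comp
      (ContinuousLinearMap.fst ℝ ((Fin m → ℝ) × (Fin m → ℝ)) (Fin k → ℝ))).prod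
    (((ContinuousLinearMap.snd ℝ (Fin m → ℝ) (Fin m → ℝ)).comp
        (ContinuousLinearMap.fst ℝ ((Fin m → ℝ) × (Fin m → ℝ)) (Fin k → ℝ)))
      - (ε/2) • ∑ j, (w₀ j • ((fderiv ℝ (fun x => G x j) x1).comp
            ((ContinuousLinearMap.fst ℝ (Fin m → ℝ) (Fin m → ℝ)).comp
              (ContinuousLinearMap.fst ℝ ((Fin m → ℝ) × (Fin m → ℝ)) (Fin k → ℝ))))
          + ((ContinuousLinearMap.proj j).comp
              (ContinuousLinearMap.snd ℝ ((Fin m → ℝ) × (Fin m → ℝ)) (Fin k → ℝ))).smulRight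
              (G x1 j)))

lemma rowsum (x : Fin m → ℝ) (w : Fin k → ℝ) :
    (G x)ᵀ *ᵥ w = ∑ j, w j • G x j := by
  funext i
  simp [Matrix.mulVec, dotProduct, Matrix.transpose_apply, Finset.sum_apply,
    mul_comm]

lemma DPmap_apply (x1 : Fin m → ℝ) (w₀ : Fin k → ℝ)
    (z : ((Fin m → ℝ) × (Fin m → ℝ)) × (Fin k → ℝ)) :
    DPmap ε G x1 w₀ z
      = (z.1.1, z.1.2 - (ε/2) • ((∑ j, w₀ j • fderiv ℝ (fun x => G x j) x1 z.1.1)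
          + (G x1)ᵀ *ᵥ z.2)) := by
  simp only [DPmap, ContinuousLinearMap.prod_apply, ContinuousLinearMap.comp_apply,
    ContinuousLinearMap.coe_fst', ContinuousLinearMap.coe_snd', ContinuousLinearMap.sub_apply,
    ContinuousLinearMap.smul_apply, ContinuousLinearMap.sum_apply, ContinuousLinearMap.add_apply,
    ContinuousLinearMap.smulRight_apply, ContinuousLinearMap.proj_apply]
  rw [rowsum]
  congr 1
  rw [Finset.sum_add_distrib]

lemma hasFDerivAt_P (hGdiff : ∀ j, Differentiable ℝ (fun x => G x j))
    (x₀ : (Fin m → ℝ) × (Fin m → ℝ)) (w₀ : Fin k → ℝ) :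
    HasFDerivAt (fun zw : ((Fin m → ℝ) × (Fin m → ℝ)) × (Fin k → ℝ) =>
        (zw.1.1, zw.1.2 - (ε/2) • (G zw.1.1)ᵀ.mulVec zw.2))
      (DPmap ε G x₀.1 w₀) (x₀, w₀) := by
  have hfun : (fun zw : ((Fin m → ℝ) × (Fin m → ℝ)) × (Fin k → ℝ) =>
        (zw.1.1, zw.1.2 - (ε/2) • (G zw.1.1)ᵀ.mulVec zw.2))
      = fun zw => (zw.1.1, zw.1.2 - (ε/2) • ∑ j, zw.2 j • G zw.1.1 j) := by
    funext zw
    rw [rowsum]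
  rw [hfun, DPmap]
  apply HasFDerivAt.prodMk
  · exact (hasFDerivAt_fst.comp _ hasFDerivAt_fst)
  · apply HasFDerivAt.sub
    · exact (hasFDerivAt_snd.comp _ hasFDerivAt_fst)
    · apply HasFDerivAt.fun_const_smul
      apply HasFDerivAt.fun_sum
      intro j _
      have hc : HasFDerivAt
          (fun zw : ((Fin m → ℝ) × (Fin m → ℝ)) × (Fin k → ℝ) => zw.2 j)
          (((ContinuousLinearMap.proj j : (Fin k → ℝ) →L[ℝ] ℝ)).comp
            (ContinuousLinearMap.snd ℝ ((Fin m → ℝ) × (Fin m → ℝ)) (Fin k → ℝ)))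
          (x₀, w₀) :=
        (((ContinuousLinearMap.proj j : (Fin k → ℝ) →L[ℝ] ℝ)).comp
          (ContinuousLinearMap.snd ℝ ((Fin m → ℝ) × (Fin m → ℝ)) (Fin k → ℝ))).hasFDerivAt
      have hf : HasFDerivAt
          (fun zw : ((Fin m → ℝ) × (Fin m → ℝ)) × (Fin k → ℝ) => G zw.1.1 j)
          ((fderiv ℝ (fun x => G x j) x₀.1).comp
            ((ContinuousLinearMap.fst ℝ (Fin m → ℝ) (Fin m → ℝ)).comp
              (ContinuousLinearMap.fst ℝ ((Fin m → ℝ) × (Fin m → ℝ)) (Fin k → ℝ))))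
          (x₀, w₀) := by
        exact ((hGdiff j) x₀.1).hasFDerivAt.comp (x₀, w₀)
          (((ContinuousLinearMap.fst ℝ (Fin m → ℝ) (Fin m → ℝ)).comp
            (ContinuousLinearMap.fst ℝ ((Fin m → ℝ) × (Fin m → ℝ)) (Fin k → ℝ))).hasFDerivAt)
      exact hc.smul hf

end P

section C

noncomputable def DC1map (ε : ℝ) (gradU : (Fin m → ℝ) → (Fin m → ℝ)) (x : Fin m → ℝ) :
    ((Fin m → ℝ) × (Fin m → ℝ)) →L[ℝ] ((Fin m → ℝ) × (Fin m → ℝ)) :=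
  (ContinuousLinearMap.fst ℝ (Fin m → ℝ) (Fin m → ℝ)).prod
    ((ContinuousLinearMap.snd ℝ (Fin m → ℝ) (Fin m → ℝ))
      - (ε/2) • ((fderiv ℝ gradU x).comp (ContinuousLinearMap.fst ℝ (Fin m → ℝ) (Fin m → ℝ))))

lemma DC1map_apply (ε : ℝ) (gradU : (Fin m → ℝ) → (Fin m → ℝ)) (x : Fin m → ℝ)
    (z : (Fin m → ℝ) × (Fin m → ℝ)) :
    DC1map ε gradU x z = (z.1, z.2 - (ε/2) • fderiv ℝ gradU x z.1) := by
  simp [DC1map]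

lemma hasFDerivAt_C1 (ε : ℝ) (gradU : (Fin m → ℝ) → (Fin m → ℝ))
    (hgU : Differentiable ℝ gradU) (y : (Fin m → ℝ) × (Fin m → ℝ)) :
    HasFDerivAt (fun z : (Fin m → ℝ) × (Fin m → ℝ) => (z.1, z.2 - (ε/2) • gradU z.1))
      (DC1map ε gradU y.1) y := by
  apply HasFDerivAt.prodMk
  · exact hasFDerivAt_fst
  · exact hasFDerivAt_snd.sub
      (((hgU y.1).hasFDerivAt.comp y
        ((ContinuousLinearMap.fst ℝ (Fin m → ℝ) (Fin m → ℝ)).hasFDerivAt)).const_smul (ε/2))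

noncomputable def C2map (A E : Matrix (Fin m) (Fin m) ℝ) :
    ((Fin m → ℝ) × (Fin m → ℝ)) →L[ℝ] ((Fin m → ℝ) × (Fin m → ℝ)) :=
  ((ContinuousLinearMap.fst ℝ (Fin m → ℝ) (Fin m → ℝ))
      + (mulVecCLM A).comp (ContinuousLinearMap.snd ℝ (Fin m → ℝ) (Fin m → ℝ))).prod
    ((mulVecCLM E).comp (ContinuousLinearMap.snd ℝ (Fin m → ℝ) (Fin m → ℝ)))

lemma C2map_apply (A E : Matrix (Fin m) (Fin m) ℝ) (z : (Fin m → ℝ) × (Fin m → ℝ)) :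
    C2map A E z = (z.1 + A *ᵥ z.2, E *ᵥ z.2) := by
  simp [C2map]

lemma hasFDerivAt_C2 (A E : Matrix (Fin m) (Fin m) ℝ) (y : (Fin m → ℝ) × (Fin m → ℝ)) :
    HasFDerivAt (fun z : (Fin m → ℝ) × (Fin m → ℝ) => (z.1 + A *ᵥ z.2, E *ᵥ z.2))
      (C2map A E) y := by
  have : (fun z : (Fin m → ℝ) × (Fin m → ℝ) => (z.1 + A *ᵥ z.2, E *ᵥ z.2))
      = ⇑(C2map A E) := by
    funext z
    rw [C2map_apply]
  rw [this]
  exact (C2map A E).hasFDerivAt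

end C


lemma dot_sum {k : ℕ} (a : Fin m → ℝ) (f : Fin k → (Fin m → ℝ)) :
    a ⬝ᵥ (∑ j, f j) = ∑ j, a ⬝ᵥ f j := by
  simp only [dotProduct, Finset.sum_apply, Finset.mul_sum]
  rw [Finset.sum_comm]

lemma sum_sym {k : ℕ} (w : Fin k → ℝ) (f : Fin k → (Fin m → ℝ) → (Fin m → ℝ))
    (a b : Fin m → ℝ) (hsym : ∀ j, a ⬝ᵥ f j b = b ⬝ᵥ f j a) :
    a ⬝ᵥ (∑ j, w j • f j b) = b ⬝ᵥ (∑ j, w j • f j a) := by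
  rw [dot_sum, dot_sum]
  apply Finset.sum_congr rfl
  intro j _
  rw [dotProduct_smul, dotProduct_smul, hsym j]
lemma dot_transpose_mulVec {k : ℕ} (G' : Matrix (Fin k) (Fin m) ℝ)
    (x : Fin m → ℝ) (t : Fin k → ℝ) :
    x ⬝ᵥ (G'ᵀ *ᵥ t) = (G' *ᵥ x) ⬝ᵥ t := by
  rw [Matrix.dotProduct_mulVec, Matrix.vecMul_transpose]

lemma shift_step0 (L : Matrix (Fin m) (Fin m) ℝ) (ε : ℝ)
    (x y : (Fin m → ℝ) × (Fin m → ℝ)) (su sv : Fin m → ℝ)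
    (hsym : x.1 ⬝ᵥ sv = y.1 ⬝ᵥ su) :
    x.1 ⬝ᵥ L *ᵥ y.1 + x.1 ⬝ᵥ (y.2 - (ε/2) • sv) - y.1 ⬝ᵥ (x.2 - (ε/2) • su)
    = x.1 ⬝ᵥ L *ᵥ y.1 + x.1 ⬝ᵥ y.2 - y.1 ⬝ᵥ x.2 := by
  simp only [dotProduct_sub, dotProduct_smul, smul_eq_mul]
  rw [hsym]
  ring

lemma shift_step {k : ℕ} (L : Matrix (Fin m) (Fin m) ℝ) (ε : ℝ)
    (x y : (Fin m → ℝ) × (Fin m → ℝ)) (su sv : Fin m → ℝ)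
    (G' : Matrix (Fin k) (Fin m) ℝ) (tu tv : Fin k → ℝ)
    (hGx : G' *ᵥ x.1 = 0) (hGy : G' *ᵥ y.1 = 0)
    (hsym : x.1 ⬝ᵥ sv = y.1 ⬝ᵥ su) :
    x.1 ⬝ᵥ L *ᵥ y.1 + x.1 ⬝ᵥ (y.2 - (ε/2) • (sv + G'ᵀ *ᵥ tv))
      - y.1 ⬝ᵥ (x.2 - (ε/2) • (su + G'ᵀ *ᵥ tu))
    = x.1 ⬝ᵥ L *ᵥ y.1 + x.1 ⬝ᵥ y.2 - y.1 ⬝ᵥ x.2 := by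
  apply shift_step0
  simp only [dotProduct_add, dot_transpose_mulVec, hGx, hGy, zero_dotProduct, add_zero, hsym]

lemma omega_chain {k : ℕ} (L A E : Matrix (Fin m) (Fin m) ℝ) (ε : ℝ)
    (hL : Lᵀ = -L) (hM1 : L * A = 1 - E) (hM2 : Aᵀ * E = A)
    (u v : (Fin m → ℝ) × (Fin m → ℝ))
    (Gq Gh : Matrix (Fin k) (Fin m) ℝ)
    (Su Sv du dv eu ev su sv : Fin m → ℝ)
    (tu tv ru rv : Fin k → ℝ)
    (m2u m2v Xu Xv Pu Pv : Fin m → ℝ)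
    (hm2u : m2u = u.2 - (ε/2) • (Su + Gqᵀ *ᵥ tu) - (ε/2) • du)
    (hm2v : m2v = v.2 - (ε/2) • (Sv + Gqᵀ *ᵥ tv) - (ε/2) • dv)
    (hXu : Xu = u.1 + A *ᵥ m2u) (hXv : Xv = v.1 + A *ᵥ m2v)
    (hPu : Pu = E *ᵥ m2u) (hPv : Pv = E *ᵥ m2v)
    (hS : u.1 ⬝ᵥ Sv = v.1 ⬝ᵥ Su)
    (hd : u.1 ⬝ᵥ dv = v.1 ⬝ᵥ du)
    (he : Xu ⬝ᵥ ev = Xv ⬝ᵥ eu)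
    (hs : Xu ⬝ᵥ sv = Xv ⬝ᵥ su)
    (hu : Gq *ᵥ u.1 = 0) (hv : Gq *ᵥ v.1 = 0)
    (hu' : Gh *ᵥ Xu = 0) (hv' : Gh *ᵥ Xv = 0) :
    Xu ⬝ᵥ L *ᵥ Xv + Xu ⬝ᵥ (Pv - (ε/2) • ev - (ε/2) • (sv + Ghᵀ *ᵥ rv))
      - Xv ⬝ᵥ (Pu - (ε/2) • eu - (ε/2) • (su + Ghᵀ *ᵥ ru))
    = u.1 ⬝ᵥ L *ᵥ v.1 + u.1 ⬝ᵥ v.2 - v.1 ⬝ᵥ u.2 := by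
  have step1 := shift_step L ε (Xu, Pu - (ε/2) • eu) (Xv, Pv - (ε/2) • ev)
    su sv Gh ru rv hu' hv' hs
  have step2 := shift_step0 L ε (Xu, Pu) (Xv, Pv) eu ev he
  have step3 : Xu ⬝ᵥ L *ᵥ Xv + Xu ⬝ᵥ Pv - Xv ⬝ᵥ Pu
      = u.1 ⬝ᵥ L *ᵥ v.1 + u.1 ⬝ᵥ m2v - v.1 ⬝ᵥ m2u := by
    rw [hXu, hXv, hPu, hPv]
    exact omega_phi2 L A E hL hM1 hM2 u.1 m2u v.1 m2v
  have step4 := shift_step0 L ε (u.1, u.2 - (ε/2) • (Su + Gqᵀ *ᵥ tu))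
    (v.1, v.2 - (ε/2) • (Sv + Gqᵀ *ᵥ tv)) du dv hd
  have step5 := shift_step L ε (u.1, u.2) (v.1, v.2) Su Sv Gq tu tv hu hv hS
  calc Xu ⬝ᵥ L *ᵥ Xv + Xu ⬝ᵥ (Pv - (ε/2) • ev - (ε/2) • (sv + Ghᵀ *ᵥ rv))
      - Xv ⬝ᵥ (Pu - (ε/2) • eu - (ε/2) • (su + Ghᵀ *ᵥ ru))
      = Xu ⬝ᵥ L *ᵥ Xv + Xu ⬝ᵥ (Pv - (ε/2) • ev) - Xv ⬝ᵥ (Pu - (ε/2) • eu) := step1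
    _ = Xu ⬝ᵥ L *ᵥ Xv + Xu ⬝ᵥ Pv - Xv ⬝ᵥ Pu := step2
    _ = u.1 ⬝ᵥ L *ᵥ v.1 + u.1 ⬝ᵥ m2v - v.1 ⬝ᵥ m2u := step3
    _ = u.1 ⬝ᵥ L *ᵥ v.1 + u.1 ⬝ᵥ (v.2 - (ε/2) • (Sv + Gqᵀ *ᵥ tv))
          - v.1 ⬝ᵥ (u.2 - (ε/2) • (Su + Gqᵀ *ᵥ tu)) := by rw [hm2u, hm2v]; exact step4
    _ = u.1 ⬝ᵥ L *ᵥ v.1 + u.1 ⬝ᵥ v.2 - v.1 ⬝ᵥ u.2 := step5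

/-- One step `T` of the manifold-constrained magnetic integrator (momentum
shift by `μ`, the Euclidean magnetic step `Ψ_ε`, momentum shift by `ν`)
preserves the magnetic symplectic 2-form
`⟨u, J_L v⟩ = ⟨u_q, L v_q⟩ + ⟨u_q, v_p⟩ - ⟨v_q, u_p⟩` on pairs of vectors
tangent to the constraint set (whose images under `DT` are again tangent). -/
theorem stmt14 {m k : ℕ}
    (U : (Fin m → ℝ) → ℝ) (gradU : (Fin m → ℝ) → (Fin m → ℝ))
    (hU : ContDiff ℝ 2 U)
    (hgradU : ∀ x v, fderiv ℝ U x v = gradU x ⬝ᵥ v)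
    (g : (Fin m → ℝ) → (Fin k → ℝ)) (G : (Fin m → ℝ) → Matrix (Fin k) (Fin m) ℝ)
    (hg : ContDiff ℝ 2 g)
    (hG : ∀ x v, fderiv ℝ g x v = (G x).mulVec v)
    (L : Matrix (Fin m) (Fin m) ℝ) (hL : Lᵀ = -L)
    (ε : ℝ)
    (μ ν : (Fin m → ℝ) × (Fin m → ℝ) → (Fin k → ℝ))
    (hμ : Differentiable ℝ μ) (hν : Differentiable ℝ ν)
    (A : ℝ → Matrix (Fin m) (Fin m) ℝ)
    (hA : ∀ ε' : ℝ, A ε' = Matrix.of fun i j =>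
      ∫ s in (0:ℝ)..ε', NormedSpace.exp (-(s • L)) i j)
    (Φ1 Φ2 Ψ : ℝ → (Fin m → ℝ) × (Fin m → ℝ) → (Fin m → ℝ) × (Fin m → ℝ))
    (hΦ1 : ∀ ε' z, Φ1 ε' z = (z.1, z.2 - (ε'/2) • gradU z.1))
    (hΦ2 : ∀ ε' z, Φ2 ε' z =
      (z.1 + (A ε').mulVec z.2, (NormedSpace.exp (-(ε' • L))).mulVec z.2))
    (hΨ : ∀ ε', Ψ ε' = Φ1 ε' ∘ Φ2 ε' ∘ Φ1 ε')
    (T : (Fin m → ℝ) × (Fin m → ℝ) → (Fin m → ℝ) × (Fin m → ℝ))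
    (hT : ∀ z, T z =
      ((Ψ ε (z.1, z.2 - (ε/2) • (G z.1)ᵀ.mulVec (μ z))).1,
        (Ψ ε (z.1, z.2 - (ε/2) • (G z.1)ᵀ.mulVec (μ z))).2
          - (ε/2) • (G ((Ψ ε (z.1, z.2 - (ε/2) • (G z.1)ᵀ.mulVec (μ z))).1))ᵀ.mulVec (ν z)))
    (q p : Fin m → ℝ)
    (hTdiff : DifferentiableAt ℝ T (q, p))
    (qhat : Fin m → ℝ)
    (hqhat : qhat = (Ψ ε (q, p - (ε/2) • (G q)ᵀ.mulVec (μ (q, p)))).1)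
    (u v : (Fin m → ℝ) × (Fin m → ℝ))
    (hu : (G q).mulVec u.1 = 0) (hv : (G q).mulVec v.1 = 0)
    (hu' : (G qhat).mulVec ((fderiv ℝ T (q, p) u).1) = 0)
    (hv' : (G qhat).mulVec ((fderiv ℝ T (q, p) v).1) = 0) :
    (fderiv ℝ T (q, p) u).1 ⬝ᵥ L.mulVec ((fderiv ℝ T (q, p) v).1)
      + (fderiv ℝ T (q, p) u).1 ⬝ᵥ (fderiv ℝ T (q, p) v).2
      - (fderiv ℝ T (q, p) v).1 ⬝ᵥ (fderiv ℝ T (q, p) u).2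
    = u.1 ⬝ᵥ L.mulVec v.1 + u.1 ⬝ᵥ v.2 - v.1 ⬝ᵥ u.2 := by
  clear hTdiff
  -- differentiability and symmetry facts
  have hgdiff : Differentiable ℝ g := hg.differentiable two_ne_zero
  have hrow_grad : ∀ (j : Fin k) (x w : Fin m → ℝ),
      fderiv ℝ (fun y => g y j) x w = G x j ⬝ᵥ w := by
    intro j x w
    have h1 : HasFDerivAt (fun y => g y j)
        ((ContinuousLinearMap.proj j : ((Fin k → ℝ) →L[ℝ] ℝ)).comp (fderiv ℝ g x)) x :=
      (ContinuousLinearMap.proj j :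
        ((Fin k → ℝ) →L[ℝ] ℝ)).hasFDerivAt.comp x (hgdiff x).hasFDerivAt
    rw [h1.fderiv]
    simp only [ContinuousLinearMap.comp_apply, ContinuousLinearMap.proj_apply, hG x w]
    rfl
  have hrow_cd : ∀ j, ContDiff ℝ 2 (fun x => g x j) := fun j =>
    (ContinuousLinearMap.proj j : ((Fin k → ℝ) →L[ℝ] ℝ)).contDiff.comp hg
  have hrow_diff : ∀ j, Differentiable ℝ (fun x => G x j) :=
    fun j => grad_diff _ _ (hrow_cd j) (fun x w => hrow_grad j x w)
  have hrow_symm : ∀ (j : Fin k) (x a b : Fin m → ℝ),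
      a ⬝ᵥ fderiv ℝ (fun y => G y j) x b = b ⬝ᵥ fderiv ℝ (fun y => G y j) x a :=
    fun j x a b => grad_symm _ _ (hrow_cd j) (fun x w => hrow_grad j x w) x a b
  have hgU_diff : Differentiable ℝ gradU := grad_diff U gradU hU hgradU
  have hgU_symm : ∀ x a b : Fin m → ℝ,
      a ⬝ᵥ fderiv ℝ gradU x b = b ⬝ᵥ fderiv ℝ gradU x a :=
    fun x a b => grad_symm U gradU hU hgradU x a b
  -- matrix facts
  have hAe : A ε = Aa m L ε := by rw [hA]; rfl
  have hM1' : L * A ε = 1 - Ee m L ε := by rw [hAe]; exact M1 L ε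
  have hM2' : (A ε)ᵀ * Ee m L ε = A ε := by rw [hAe]; exact M2 L hL ε
  -- explicit form of T
  have hTeq : T = fun z : (Fin m → ℝ) × (Fin m → ℝ) =>
      (fun zw : ((Fin m → ℝ) × (Fin m → ℝ)) × (Fin k → ℝ) =>
          (zw.1.1, zw.1.2 - (ε/2) • (G zw.1.1)ᵀ.mulVec zw.2))
        ((fun z' : (Fin m → ℝ) × (Fin m → ℝ) => (z'.1, z'.2 - (ε/2) • gradU z'.1))
          ((fun z' : (Fin m → ℝ) × (Fin m → ℝ) =>
              (z'.1 + (A ε) *ᵥ z'.2, Ee m L ε *ᵥ z'.2))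
            ((fun z' : (Fin m → ℝ) × (Fin m → ℝ) => (z'.1, z'.2 - (ε/2) • gradU z'.1))
              ((fun zw : ((Fin m → ℝ) × (Fin m → ℝ)) × (Fin k → ℝ) =>
                  (zw.1.1, zw.1.2 - (ε/2) • (G zw.1.1)ᵀ.mulVec zw.2))
                (z, μ z)))), ν z) := by
    funext z
    rw [hT z, hΨ ε]
    simp only [Function.comp_apply, hΦ1, hΦ2]
    rfl
  -- derivative chain
  have hinner : HasFDerivAt (fun z : (Fin m → ℝ) × (Fin m → ℝ) => (z, μ z))
      ((ContinuousLinearMap.id ℝ ((Fin m → ℝ) × (Fin m → ℝ))).prod (fderiv ℝ μ (q, p)))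
      (q, p) :=
    (hasFDerivAt_id (q, p)).prodMk (hμ (q, p)).hasFDerivAt
  have hS1 := (hasFDerivAt_P ε G hrow_diff (q, p) (μ (q, p))).comp (q, p) hinner
  have h2 := (hasFDerivAt_C1 ε gradU hgU_diff _).comp (q, p) hS1
  have h3 := (hasFDerivAt_C2 (A ε) (Ee m L ε) _).comp (q, p) h2
  have h4 := (hasFDerivAt_C1 ε gradU hgU_diff _).comp (q, p) h3
  have houter := (hasFDerivAt_P ε G hrow_diff _ (ν (q, p))).comp (q, p)
    (h4.prodMk (hν (q, p)).hasFDerivAt)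
  have hTT : HasFDerivAt T
      ((DPmap ε G (q + A ε *ᵥ ((p - (ε/2) • (G q)ᵀ.mulVec (μ (q, p))) - (ε/2) • gradU q)) (ν (q, p))).comp
        (((DC1map ε gradU (q + A ε *ᵥ ((p - (ε/2) • (G q)ᵀ.mulVec (μ (q, p))) - (ε/2) • gradU q))).comp
          ((C2map (A ε) (Ee m L ε)).comp
            ((DC1map ε gradU q).comp
              ((DPmap ε G q (μ (q, p))).comp
                ((ContinuousLinearMap.id ℝ ((Fin m → ℝ) × (Fin m → ℝ))).prod
                  (fderiv ℝ μ (q, p))))))).prod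
          (fderiv ℝ ν (q, p))))
      (q, p) := by
    rw [hTeq]; exact houter
  have hfd := hTT.fderiv
  have hqE : qhat = (q + A ε *ᵥ ((p - (ε/2) • (G q)ᵀ.mulVec (μ (q, p))) - (ε/2) • gradU q)) := by
    rw [hqhat, hΨ ε]
    simp only [Function.comp_apply, hΦ1, hΦ2]
  have hDu : fderiv ℝ T (q, p) u = ((u.1 + A ε *ᵥ ((u.2 - (ε/2) • ((∑ j, μ (q, p) j • fderiv ℝ (fun x => G x j) q u.1) + (G q)ᵀ *ᵥ fderiv ℝ μ (q, p) u)) - (ε/2) • fderiv ℝ gradU q u.1)), (Ee m L ε *ᵥ ((u.2 - (ε/2) • ((∑ j, μ (q, p) j • fderiv ℝ (fun x => G x j) q u.1) + (G q)ᵀ *ᵥ fderiv ℝ μ (q, p) u)) - (ε/2) • fderiv ℝ gradU q u.1)) - (ε/2) • (fderiv ℝ gradU (q + A ε *ᵥ ((p - (ε/2) • (G q)ᵀ.mulVec (μ (q, p))) - (ε/2) • gradU q)) (u.1 + A ε *ᵥ ((u.2 - (ε/2) • ((∑ j, μ (q, p) j • fderiv ℝ (fun x => G x j) q u.1) + (G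 q)ᵀ *ᵥ fderiv ℝ μ (q, p) u)) - (ε/2) • fderiv ℝ gradU q u.1))) - (ε/2) • ((∑ j, ν (q, p) j • fderiv ℝ (fun x => G x j) (q + A ε *ᵥ ((p - (ε/2) • (G q)ᵀ.mulVec (μ (q, p))) - (ε/2) • gradU q)) (u.1 + A ε *ᵥ ((u.2 - (ε/2) • ((∑ j, μ (q, p) j • fderiv ℝ (fun x => G x j) q u.1) + (G q)ᵀ *ᵥ fderiv ℝ μ (q, p) u)) - (ε/2) • fderiv ℝ gradU q u.1))) + (G (q + A ε *ᵥ ((p - (ε/2) • (G q)ᵀ.mulVec (μ (q, p))) - (ε/2) • gradU q)))ᵀ *ᵥ fderiv ℝ ν (q, p) u)) := by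
    rw [hfd]
    simp only [ContinuousLinearMap.comp_apply, ContinuousLinearMap.prod_apply,
      ContinuousLinearMap.id_apply, DPmap_apply, DC1map_apply, C2map_apply]
  have hDv : fderiv ℝ T (q, p) v = ((v.1 + A ε *ᵥ ((v.2 - (ε/2) • ((∑ j, μ (q, p) j • fderiv ℝ (fun x => G x j) q v.1) + (G q)ᵀ *ᵥ fderiv ℝ μ (q, p) v)) - (ε/2) • fderiv ℝ gradU q v.1)), (Ee m L ε *ᵥ ((v.2 - (ε/2) • ((∑ j, μ (q, p) j • fderiv ℝ (fun x => G x j) q v.1) + (G q)ᵀ *ᵥ fderiv ℝ μ (q, p) v)) - (ε/2) • fderiv ℝ gradU q v.1)) - (ε/2) • (fderiv ℝ gradU (q + A ε *ᵥ ((p - (ε/2) • (G q)ᵀ.mulVec (μ (q, p))) - (ε/2) • gradU q)) (v.1 + A ε *ᵥ ((v.2 - (ε/2) • ((∑ j, μ (q, p) j • fderiv ℝ (fun x => G x j) q v.1) + (G q)ᵀ *ᵥ fderiv ℝ μ (q, p) v)) - (ε/2) • fderiv ℝ gradU q v.1))) - (ε/2) • ((∑ j, ν (q, p) j • fderiv ℝ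 (fun x => G x j) (q + A ε *ᵥ ((p - (ε/2) • (G q)ᵀ.mulVec (μ (q, p))) - (ε/2) • gradU q)) (v.1 + A ε *ᵥ ((v.2 - (ε/2) • ((∑ j, μ (q, p) j • fderiv ℝ (fun x => G x j) q v.1) + (G q)ᵀ *ᵥ fderiv ℝ μ (q, p) v)) - (ε/2) • fderiv ℝ gradU q v.1))) + (G (q + A ε *ᵥ ((p - (ε/2) • (G q)ᵀ.mulVec (μ (q, p))) - (ε/2) • gradU q)))ᵀ *ᵥ fderiv ℝ ν (q, p) v)) := by
    rw [hfd]
    simp only [ContinuousLinearMap.comp_apply, ContinuousLinearMap.prod_apply,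
      ContinuousLinearMap.id_apply, DPmap_apply, DC1map_apply, C2map_apply]
  rw [hqE] at hu' hv'
  rw [hDu] at hu'
  rw [hDv] at hv'
  have hu'' : (G (q + A ε *ᵥ ((p - (ε/2) • (G q)ᵀ.mulVec (μ (q, p))) - (ε/2) • gradU q))) *ᵥ (u.1 + A ε *ᵥ ((u.2 - (ε/2) • ((∑ j, μ (q, p) j • fderiv ℝ (fun x => G x j) q u.1) + (G q)ᵀ *ᵥ fderiv ℝ μ (q, p) u)) - (ε/2) • fderiv ℝ gradU q u.1)) = 0 := hu'
  have hv'' : (G (q + A ε *ᵥ ((p - (ε/2) • (G q)ᵀ.mulVec (μ (q, p))) - (ε/2) • gradU q))) *ᵥ (v.1 + A ε *ᵥ ((v.2 - (ε/2) • ((∑ j, μ (q, p) j • fderiv ℝ (fun x => G x j) q v.1) + (G q)ᵀ *ᵥ fderiv ℝ μ (q, p) v)) - (ε/2) • fderiv ℝ gradU q v.1)) = 0 := hv'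
  rw [hDu, hDv]
  exact omega_chain L (A ε) (Ee m L ε) ε hL hM1' hM2' u v (G q) (G (q + A ε *ᵥ ((p - (ε/2) • (G q)ᵀ.mulVec (μ (q, p))) - (ε/2) • gradU q)))
    (∑ j, μ (q, p) j • fderiv ℝ (fun x => G x j) q u.1)
    (∑ j, μ (q, p) j • fderiv ℝ (fun x => G x j) q v.1)
    (fderiv ℝ gradU q u.1) (fderiv ℝ gradU q v.1)
    (fderiv ℝ gradU (q + A ε *ᵥ ((p - (ε/2) • (G q)ᵀ.mulVec (μ (q, p))) - (ε/2) • gradU q)) (u.1 + A ε *ᵥ ((u.2 - (ε/2) • ((∑ j, μ (q, p) j • fderiv ℝ (fun x => G x j) q u.1) + (G q)ᵀ *ᵥ fderiv ℝ μ (q, p) u)) - (ε/2) • fderiv ℝ gradU q u.1))) (fderiv ℝ gradU (q + A ε *ᵥ ((p - (ε/2) • (G q)ᵀ.mulVec (μ (q, p))) - (ε/2) • gradU q)) (v.1 + A ε *ᵥ ((v.2 - (ε/2) • ((∑ j, μ (q, p) j • fderiv ℝ (fun x => G x j) q v.1) + (G q)ᵀ *ᵥ fderiv ℝ μ (q, p)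 v)) - (ε/2) • fderiv ℝ gradU q v.1))) (∑ j, ν (q, p) j • fderiv ℝ (fun x => G x j) (q + A ε *ᵥ ((p - (ε/2) • (G q)ᵀ.mulVec (μ (q, p))) - (ε/2) • gradU q)) (u.1 + A ε *ᵥ ((u.2 - (ε/2) • ((∑ j, μ (q, p) j • fderiv ℝ (fun x => G x j) q u.1) + (G q)ᵀ *ᵥ fderiv ℝ μ (q, p) u)) - (ε/2) • fderiv ℝ gradU q u.1))) (∑ j, ν (q, p) j • fderiv ℝ (fun x => G x j) (q + A ε *ᵥ ((p - (ε/2) • (G q)ᵀ.mulVec (μ (q, p))) - (ε/2) • gradU q)) (v.1 + A ε *ᵥ ((v.2 - (ε/2) • ((∑ j, μ (q, p) j • fderiv ℝ (fun x => G x j) q v.1) + (G q)ᵀ *ᵥ fderiv ℝ μ (q, p) v)) - (ε/2) • fderiv ℝ gradU q v.1)))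
    (fderiv ℝ μ (q, p) u) (fderiv ℝ μ (q, p) v)
    (fderiv ℝ ν (q, p) u) (fderiv ℝ ν (q, p) v)
    ((u.2 - (ε/2) • ((∑ j, μ (q, p) j • fderiv ℝ (fun x => G x j) q u.1) + (G q)ᵀ *ᵥ fderiv ℝ μ (q, p) u)) - (ε/2) • fderiv ℝ gradU q u.1) ((v.2 - (ε/2) • ((∑ j, μ (q, p) j • fderiv ℝ (fun x => G x j) q v.1) + (G q)ᵀ *ᵥ fderiv ℝ μ (q, p) v)) - (ε/2) • fderiv ℝ gradU q v.1) (u.1 + A ε *ᵥ ((u.2 - (ε/2) • ((∑ j, μ (q, p) j • fderiv ℝ (fun x => G x j) q u.1) + (G q)ᵀ *ᵥ fderiv ℝ μ (q, p) u)) - (ε/2) • fderiv ℝ gradU q u.1)) (v.1 + A ε *ᵥ ((v.2 - (ε/2) • ((∑ j, μ (q, p) j • fderiv ℝ (fun x => G x j) q v.1) + (G q)ᵀ *ᵥ fderiv ℝ μ (q, p) v)) - (ε/2) • fderiv ℝ gradU q v.1)) (Ee m L ε *ᵥ ((u.2 - (ε/2) • ((∑ j, μ (q, p) j • fderiv ℝ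 (fun x => G x j) q u.1) + (G q)ᵀ *ᵥ fderiv ℝ μ (q, p) u)) - (ε/2) • fderiv ℝ gradU q u.1)) (Ee m L ε *ᵥ ((v.2 - (ε/2) • ((∑ j, μ (q, p) j • fderiv ℝ (fun x => G x j) q v.1) + (G q)ᵀ *ᵥ fderiv ℝ μ (q, p) v)) - (ε/2) • fderiv ℝ gradU q v.1))
    rfl rfl rfl rfl rfl rfl
    (sum_sym (μ (q, p)) (fun j c => fderiv ℝ (fun x => G x j) q c) u.1 v.1
      (fun j => hrow_symm j q u.1 v.1))
    (hgU_symm q u.1 v.1)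
    (hgU_symm (q + A ε *ᵥ ((p - (ε/2) • (G q)ᵀ.mulVec (μ (q, p))) - (ε/2) • gradU q)) (u.1 + A ε *ᵥ ((u.2 - (ε/2) • ((∑ j, μ (q, p) j • fderiv ℝ (fun x => G x j) q u.1) + (G q)ᵀ *ᵥ fderiv ℝ μ (q, p) u)) - (ε/2) • fderiv ℝ gradU q u.1)) (v.1 + A ε *ᵥ ((v.2 - (ε/2) • ((∑ j, μ (q, p) j • fderiv ℝ (fun x => G x j) q v.1) + (G q)ᵀ *ᵥ fderiv ℝ μ (q, p) v)) - (ε/2) • fderiv ℝ gradU q v.1)))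
    (sum_sym (ν (q, p)) (fun j c => fderiv ℝ (fun x => G x j) (q + A ε *ᵥ ((p - (ε/2) • (G q)ᵀ.mulVec (μ (q, p))) - (ε/2) • gradU q)) c) (u.1 + A ε *ᵥ ((u.2 - (ε/2) • ((∑ j, μ (q, p) j • fderiv ℝ (fun x => G x j) q u.1) + (G q)ᵀ *ᵥ fderiv ℝ μ (q, p) u)) - (ε/2) • fderiv ℝ gradU q u.1)) (v.1 + A ε *ᵥ ((v.2 - (ε/2) • ((∑ j, μ (q, p) j • fderiv ℝ (fun x => G x j) q v.1) + (G q)ᵀ *ᵥ fderiv ℝ μ (q, p) v)) - (ε/2) • fderiv ℝ gradU q v.1))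
      (fun j => hrow_symm j (q + A ε *ᵥ ((p - (ε/2) • (G q)ᵀ.mulVec (μ (q, p))) - (ε/2) • gradU q)) (u.1 + A ε *ᵥ ((u.2 - (ε/2) • ((∑ j, μ (q, p) j • fderiv ℝ (fun x => G x j) q u.1) + (G q)ᵀ *ᵥ fderiv ℝ μ (q, p) u)) - (ε/2) • fderiv ℝ gradU q u.1)) (v.1 + A ε *ᵥ ((v.2 - (ε/2) • ((∑ j, μ (q, p) j • fderiv ℝ (fun x => G x j) q v.1) + (G q)ᵀ *ᵥ fderiv ℝ μ (q, p) v)) - (ε/2) • fderiv ℝ gradU q v.1))))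
    hu hv hu'' hv''
end
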